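/- arXiv:1907.13078 — 17 statements merged into one kernel-verified Lean document; each statement's English description precedes it below -/
import Mathlib

section
/- Greedy marking by sorting realizes minimal Dörfler marking: if π is a permutation of {1,…,N} with x_{π(1)} ≥ x_{π(2)} ≥ … ≥ x_{π(N)}, v = θ·∑_{j=1}^N x_j, and n is the minimal index with v ≤ ∑_{i=1}^n x_{π(i)}, then M = {π(1),…,π(n)} satisfies the Dörfler criterion and #M = N_min. -/
/-- Top-m sum of a decreasing (on Icc 1 N) function dominates any m-subset sum. -/
lemma aux_top_sum (N : ℕ) (f : ℕ → ℝ)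
    (hf : ∀ i ∈ Finset.Icc 1 N, ∀ j ∈ Finset.Icc 1 N, i ≤ j → f j ≤ f i)
    (T : Finset ℕ) (hT : T ⊆ Finset.Icc 1 N) :
    ∑ j ∈ T, f j ≤ ∑ i ∈ Finset.Icc 1 T.card, f i := by
  set m := T.card with hm
  have g := T.orderEmbOfFin hm.symm
  have hgmem : ∀ i : Fin m, T.orderEmbOfFin hm.symm i ∈ T := fun i =>
    Finset.orderEmbOfFin_mem T hm.symm i
  have hge : ∀ k : ℕ, ∀ hk : k < m, k + 1 ≤ T.orderEmbOfFin hm.symm ⟨k, hk⟩ := by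
    intro k
    induction k with
    | zero =>
      intro hk
      have := hT (hgmem ⟨0, hk⟩)
      simpa using (Finset.mem_Icc.mp this).1
    | succ k ih =>
      intro hk
      have hk' : k < m := Nat.lt_of_succ_lt hk
      have hlt : T.orderEmbOfFin hm.symm ⟨k, hk'⟩ < T.orderEmbOfFin hm.symm ⟨k+1, hk⟩ := by
        apply (T.orderEmbOfFin hm.symm).strictMono
        exact Fin.mk_lt_mk.mpr (Nat.lt_succ_self k)
      have := ih hk'
      omega
  have hsum1 : ∑ j ∈ T, f j = ∑ i : Fin m, f (T.orderEmbOfFin hm.symm i) := by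
    rw [← Finset.sum_coe_sort T f,
      ← Equiv.sum_comp (T.orderIsoOfFin hm.symm).toEquiv (fun t : T => f t)]
    apply Finset.sum_congr rfl
    intro i _
    simp [Finset.coe_orderIsoOfFin_apply]
  have hsum2 : ∑ i ∈ Finset.Icc 1 m, f i = ∑ i : Fin m, f (i + 1) := by
    rw [Fin.sum_univ_eq_sum_range (fun i => f (i + 1)) m, ← Finset.Ico_add_one_right_eq_Icc,
      Finset.sum_Ico_eq_sum_range]
    simp [add_comm]
  rw [hsum1, hsum2]
  apply Finset.sum_le_sum
  intro i _
  have hmemT := hT (hgmem i)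
  have hNmem := Finset.mem_Icc.mp hmemT
  have h1 : (i : ℕ) + 1 ≤ T.orderEmbOfFin hm.symm i := by
    have := hge i.1 i.2
    simpa using this
  exact hf ((i : ℕ) + 1) (Finset.mem_Icc.mpr ⟨by omega, by omega⟩)
    (T.orderEmbOfFin hm.symm i) hmemT h1

/-- Greedy marking by sorting realizes minimal Dörfler marking: if π sorts x in
descending order on {1,…,N}, v = θ·∑ x_j, and n is minimal with v ≤ ∑_{i≤n} x_{π(i)},
then M = {π(1),…,π(n)} satisfies the Dörfler criterion and #M = N_min. -/
theorem stmt_2 (N : ℕ) (θ : ℝ) (hθ0 : 0 < θ) (hθ1 : θ < 1) (x : ℕ → ℝ)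
    (hx : ∀ j ∈ Finset.Icc 1 N, 0 ≤ x j)
    (hx0 : ∃ j ∈ Finset.Icc 1 N, x j ≠ 0)
    (π : Equiv.Perm ℕ) (hπ : ∀ j ∈ Finset.Icc 1 N, π j ∈ Finset.Icc 1 N)
    (hsort : ∀ i ∈ Finset.Icc 1 N, ∀ j ∈ Finset.Icc 1 N, i ≤ j → x (π j) ≤ x (π i))
    (n : ℕ)
    (hn : θ * ∑ j ∈ Finset.Icc 1 N, x j ≤ ∑ i ∈ Finset.Icc 1 n, x (π i))
    (hnmin : ∀ m, m < n →
      ¬(θ * ∑ j ∈ Finset.Icc 1 N, x j ≤ ∑ i ∈ Finset.Icc 1 m, x (π i))) :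
    (θ * ∑ j ∈ Finset.Icc 1 N, x j ≤ ∑ j ∈ (Finset.Icc 1 n).image π, x j) ∧
    ((Finset.Icc 1 n).image ⇑π).card = n ∧
    (∀ M' ⊆ Finset.Icc 1 N,
      θ * ∑ j ∈ Finset.Icc 1 N, x j ≤ ∑ j ∈ M', x j →
      ((Finset.Icc 1 n).image ⇑π).card ≤ M'.card) := by
  have hinj : Function.Injective π := π.injective
  have himg : ∑ j ∈ (Finset.Icc 1 n).image π, x j = ∑ i ∈ Finset.Icc 1 n, x (π i) :=
    Finset.sum_image (fun a _ b _ h => hinj h)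
  have hcard : ((Finset.Icc 1 n).image ⇑π).card = n := by
    rw [Finset.card_image_of_injective _ hinj, Nat.card_Icc]
    omega
  -- π maps Icc 1 N onto Icc 1 N
  have himage : (Finset.Icc 1 N).image π = Finset.Icc 1 N := by
    apply Finset.eq_of_subset_of_card_le
    · intro j hj
      obtain ⟨k, hk, rfl⟩ := Finset.mem_image.mp hj
      exact hπ k hk
    · rw [Finset.card_image_of_injective _ hinj]
  refine ⟨himg ▸ hn, hcard, ?_⟩
  intro M' hM' hDorf
  rw [hcard]
  by_contra hlt
  push_neg at hlt
  set T := M'.image π.symm with hT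
  have hTsub : T ⊆ Finset.Icc 1 N := by
    intro t ht
    obtain ⟨j, hj, rfl⟩ := Finset.mem_image.mp ht
    have : j ∈ (Finset.Icc 1 N).image π := by rw [himage]; exact hM' hj
    obtain ⟨k, hk, rfl⟩ := Finset.mem_image.mp this
    simpa using hk
  have hTcard : T.card = M'.card :=
    Finset.card_image_of_injective _ π.symm.injective
  have hsumT : ∑ j ∈ T, x (π j) = ∑ j ∈ M', x j := by
    rw [hT, Finset.sum_image (fun a _ b _ h => π.symm.injective h)]
    simp
  have key := aux_top_sum N (fun j => x (π j)) hsort T hTsub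
  rw [hsumT, hTcard] at key
  exact hnmin M'.card hlt (le_trans hDorf key)
end

section
/- If M_min ⊆ {1,…,N} satisfies the Dörfler criterion with minimal cardinality N_min, π sorts x in descending order, and n is minimal with θ·∑_j x_j ≤ ∑_{i=1}^n x_{π(i)}, then n − 1 < N_min ≤ n, i.e., n = N_min. -/
lemma top_sum_aux (N : ℕ) (y : ℕ → ℝ)
    (hmono : ∀ i ∈ Finset.Icc 1 N, ∀ j ∈ Finset.Icc 1 N, i ≤ j → y j ≤ y i) :
    ∀ k : ℕ, ∀ T ⊆ Finset.Icc 1 N, T.card = k →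
      ∑ i ∈ T, y i ≤ ∑ i ∈ Finset.Icc 1 k, y i := by
  intro k
  induction k with
  | zero =>
    intro T hT hcard
    rw [Finset.card_eq_zero] at hcard
    simp [hcard]
  | succ k ih =>
    intro T hT hcard
    have hne : T.Nonempty := Finset.card_pos.mp (by omega)
    set t := T.max' hne with ht
    have htT : t ∈ T := T.max'_mem hne
    have htN : t ∈ Finset.Icc 1 N := hT htT
    have hTsub : T ⊆ Finset.Icc 1 t := by
      intro a ha
      have h1 := hT ha
      simp only [Finset.mem_Icc] at h1 ⊢
      exact ⟨h1.1, T.le_max' a ha⟩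
    have htge : k + 1 ≤ t := by
      have := Finset.card_le_card hTsub
      rw [hcard, Nat.card_Icc] at this
      omega
    have htle : t ≤ N := (Finset.mem_Icc.mp htN).2
    have herase : (T.erase t).card = k := by
      rw [Finset.card_erase_of_mem htT, hcard]
      omega
    have hsub : T.erase t ⊆ Finset.Icc 1 N :=
      (Finset.erase_subset _ _).trans hT
    have h1 : ∑ i ∈ T, y i = y t + ∑ i ∈ T.erase t, y i :=
      (Finset.add_sum_erase _ _ htT).symm
    have h2 : y t ≤ y (k + 1) :=
      hmono (k + 1) (Finset.mem_Icc.mpr ⟨by omega, by omega⟩) t htN htge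
    have h3 : ∑ i ∈ Finset.Icc 1 (k + 1), y i = y (k + 1) + ∑ i ∈ Finset.Icc 1 k, y i := by
      rw [Finset.sum_Icc_succ_top (by omega : 1 ≤ k + 1)]
      ring
    rw [h1, h3]
    exact add_le_add h2 (ih _ hsub herase)

/-- If M_min ⊆ {1,…,N} satisfies the Dörfler criterion with minimal cardinality N_min,
π sorts x in descending order, and n is minimal with θ·∑ x_j ≤ ∑_{i≤n} x_{π(i)},
then n − 1 < N_min ≤ n, i.e., n = N_min. -/
theorem stmt_3 (N : ℕ) (θ : ℝ) (hθ0 : 0 < θ) (hθ1 : θ < 1) (x : ℕ → ℝ)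
    (hx : ∀ j ∈ Finset.Icc 1 N, 0 ≤ x j)
    (hx0 : ∃ j ∈ Finset.Icc 1 N, x j ≠ 0)
    (π : Equiv.Perm ℕ) (hπ : ∀ j ∈ Finset.Icc 1 N, π j ∈ Finset.Icc 1 N)
    (hsort : ∀ i ∈ Finset.Icc 1 N, ∀ j ∈ Finset.Icc 1 N, i ≤ j → x (π j) ≤ x (π i))
    (Mmin : Finset ℕ) (hMsub : Mmin ⊆ Finset.Icc 1 N)
    (hMcrit : θ * ∑ j ∈ Finset.Icc 1 N, x j ≤ ∑ j ∈ Mmin, x j)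
    (hMminimal : ∀ M' ⊆ Finset.Icc 1 N,
      θ * ∑ j ∈ Finset.Icc 1 N, x j ≤ ∑ j ∈ M', x j → Mmin.card ≤ M'.card)
    (n : ℕ)
    (hn : θ * ∑ j ∈ Finset.Icc 1 N, x j ≤ ∑ i ∈ Finset.Icc 1 n, x (π i))
    (hnmin : ∀ m, m < n →
      ¬(θ * ∑ j ∈ Finset.Icc 1 N, x j ≤ ∑ i ∈ Finset.Icc 1 m, x (π i))) :
    n - 1 < Mmin.card ∧ Mmin.card ≤ n ∧ n = Mmin.card := by
  set S := ∑ j ∈ Finset.Icc 1 N, x j with hS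
  -- S > 0
  have hSpos : 0 < S := by
    obtain ⟨j, hj, hxj⟩ := hx0
    exact Finset.sum_pos' hx ⟨j, hj, lt_of_le_of_ne (hx j hj) (Ne.symm hxj)⟩
  have hθS : 0 < θ * S := mul_pos hθ0 hSpos
  -- π maps Icc 1 N onto Icc 1 N
  have himg : (Finset.Icc 1 N).image π = Finset.Icc 1 N := by
    apply Finset.eq_of_subset_of_card_le
    · intro a ha
      obtain ⟨i, hi, rfl⟩ := Finset.mem_image.mp ha
      exact hπ i hi
    · rw [Finset.card_image_of_injective _ π.injective]
  -- n ≥ 1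
  have hn1 : 1 ≤ n := by
    by_contra h
    have : n = 0 := by omega
    rw [this] at hn
    simp at hn
    linarith
  -- n ≤ N
  have hnN : n ≤ N := by
    by_contra h
    push_neg at h
    apply hnmin N h
    have key : ∑ i ∈ Finset.Icc 1 N, x (π i)
        = ∑ j ∈ (Finset.Icc 1 N).image π, x j :=
      (Finset.sum_image (fun a _ b _ h => π.injective h)).symm
    rw [key, himg]
    nlinarith
  -- Mmin.card ≤ n
  have hcard_le : Mmin.card ≤ n := by
    apply hMminimal ((Finset.Icc 1 n).image π) ?_ ?_ |>.trans
    · rw [Finset.card_image_of_injective _ π.injective, Nat.card_Icc]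
      omega
    · intro a ha
      obtain ⟨i, hi, rfl⟩ := Finset.mem_image.mp ha
      exact hπ i (Finset.mem_Icc.mpr ⟨(Finset.mem_Icc.mp hi).1,
        le_trans (Finset.mem_Icc.mp hi).2 hnN⟩)
    · rw [Finset.sum_image (fun a _ b _ h => π.injective h)]
      exact hn
  -- n ≤ Mmin.card
  have hle : n ≤ Mmin.card := by
    by_contra h
    push_neg at h
    apply hnmin Mmin.card h
    set T := Mmin.image π.symm with hT
    have hTsub : T ⊆ Finset.Icc 1 N := by
      intro a ha
      obtain ⟨j, hj, rfl⟩ := Finset.mem_image.mp ha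
      have hjN : j ∈ Finset.Icc 1 N := hMsub hj
      rw [← himg] at hjN
      obtain ⟨i, hi, rfl⟩ := Finset.mem_image.mp hjN
      simpa using hi
    have hTcard : T.card = Mmin.card :=
      Finset.card_image_of_injective _ π.symm.injective
    have hsum : ∑ i ∈ T, x (π i) = ∑ j ∈ Mmin, x j := by
      rw [hT, Finset.sum_image (fun a _ b _ h => π.symm.injective h)]
      simp
    have := top_sum_aux N (fun i => x (π i)) hsort Mmin.card T hTsub hTcard
    rw [hsum] at this
    exact le_trans hMcrit this
  exact ⟨by omega, hcard_le, by omega⟩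
end

section
/- Any set M satisfying the Dörfler criterion and consisting of indices of the largest entries (i.e., x_j ≥ x_k for all j ∈ M, k ∉ M) such that removing any single element of M violates the criterion, has minimal cardinality N_min. -/
/-- Any set M satisfying the Dörfler criterion, consisting of indices of the largest
entries, and such that removing any single element violates the criterion, has minimal
cardinality N_min. -/
theorem stmt_4 (N : ℕ) (θ : ℝ) (hθ0 : 0 < θ) (hθ1 : θ < 1) (x : ℕ → ℝ)
    (hx : ∀ j ∈ Finset.Icc 1 N, 0 ≤ x j)
    (hx0 : ∃ j ∈ Finset.Icc 1 N, x j ≠ 0)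
    (M : Finset ℕ) (hMsub : M ⊆ Finset.Icc 1 N)
    (ha : ∀ j ∈ M, ∀ k ∈ Finset.Icc 1 N \ M, x k ≤ x j)
    (hb1 : θ * ∑ j ∈ Finset.Icc 1 N, x j ≤ ∑ j ∈ M, x j)
    (hb2 : ∀ k ∈ M, ∑ j ∈ M.erase k, x j < θ * ∑ j ∈ Finset.Icc 1 N, x j) :
    ∀ M' ⊆ Finset.Icc 1 N,
      θ * ∑ j ∈ Finset.Icc 1 N, x j ≤ ∑ j ∈ M', x j → M.card ≤ M'.card := by
  intro M' hM'sub hM'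
  by_contra hlt
  push_neg at hlt
  obtain ⟨j₁, hj₁, hj₁0⟩ := hx0
  have hSpos : 0 < ∑ j ∈ Finset.Icc 1 N, x j :=
    Finset.sum_pos' hx ⟨j₁, hj₁, lt_of_le_of_ne (hx j₁ hj₁) (Ne.symm hj₁0)⟩
  have hvpos : 0 < θ * ∑ j ∈ Finset.Icc 1 N, x j := mul_pos hθ0 hSpos
  have hMne : M.Nonempty := by
    rcases M.eq_empty_or_nonempty with h | h
    · exfalso; rw [h] at hb1; simp at hb1; linarith
    · exact h
  obtain ⟨j₀, hj₀M, hj₀min⟩ := M.exists_min_image x hMne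
  have hc0 : 0 ≤ x j₀ := hx j₀ (hMsub hj₀M)
  have hdne : (M \ M').Nonempty := by
    rw [Finset.sdiff_nonempty]
    intro hsub
    exact absurd (Finset.card_le_card hsub) (not_le.mpr hlt)
  obtain ⟨k, hk⟩ := hdne
  have hkM : k ∈ M := (Finset.mem_sdiff.mp hk).1
  have hkM' : k ∉ M' := (Finset.mem_sdiff.mp hk).2
  have hcard : (M' \ M).card < (M \ M').card := by
    have h1 : (M \ M').card + (M ∩ M').card = M.card := Finset.card_sdiff_add_card_inter M M'
    have h2 : (M' \ M).card + (M' ∩ M).card = M'.card := Finset.card_sdiff_add_card_inter M' M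
    rw [Finset.inter_comm] at h2
    omega
  have hSsum : ∑ j ∈ M' \ M, x j ≤ ∑ j ∈ (M \ M').erase k, x j := by
    calc ∑ j ∈ M' \ M, x j ≤ (M' \ M).card • x j₀ := by
          apply Finset.sum_le_card_nsmul
          intro j hj
          have hjmem := Finset.mem_sdiff.mp hj
          exact ha j₀ hj₀M j (Finset.mem_sdiff.mpr ⟨hM'sub hjmem.1, hjmem.2⟩)
      _ ≤ ((M \ M').erase k).card • x j₀ := by
          apply nsmul_le_nsmul_left hc0
          rw [Finset.card_erase_of_mem hk]; omega
      _ ≤ ∑ j ∈ (M \ M').erase k, x j := by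
          apply Finset.card_nsmul_le_sum
          intro j hj
          exact hj₀min j (Finset.mem_sdiff.mp (Finset.mem_of_mem_erase hj)).1
  have hunion : (M' ∩ M) ∪ (M \ M').erase k = M.erase k := by
    ext m
    simp only [Finset.mem_union, Finset.mem_inter, Finset.mem_erase, Finset.mem_sdiff]
    constructor
    · rintro (⟨h1, h2⟩ | ⟨h1, h2, h3⟩)
      · exact ⟨fun he => hkM' (he ▸ h1), h2⟩
      · exact ⟨h1, h2⟩
    · rintro ⟨h1, h2⟩
      by_cases hm : m ∈ M'
      · exact Or.inl ⟨hm, h2⟩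
      · exact Or.inr ⟨h1, h2, hm⟩
  have hdisj : Disjoint (M' ∩ M) ((M \ M').erase k) := by
    apply Finset.disjoint_left.mpr
    intro m hm1 hm2
    exact (Finset.mem_sdiff.mp (Finset.mem_of_mem_erase hm2)).2 (Finset.mem_inter.mp hm1).1
  have hfinal : ∑ j ∈ M', x j ≤ ∑ j ∈ M.erase k, x j := by
    rw [← hunion, Finset.sum_union hdisj]
    have := Finset.sum_inter_add_sum_sdiff M' M x
    linarith
  linarith [hb2 k hkM]
end

section
/- Existence of a minimally-saturated greedy set: for 0 < v ≤ ∑_{j=ℓ}^u x_{π(j)}, there exists M ⊆ {ℓ,…,u} such that x_{π(j)} ≥ x_{π(k)} for all j ∈ M, k ∈ {ℓ,…,u}∖M, and ∑_{j∈M} x_{π(j)} ≥ v > ∑_{j∈M∖{k}} x_{π(j)} for all k ∈ M. -/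
/-- Existence of a minimally-saturated greedy set: for 0 < v ≤ ∑_{j=ℓ}^u x_{π(j)},
there exists M ⊆ {ℓ,…,u} with x_{π(j)} ≥ x_{π(k)} for j ∈ M, k ∈ {ℓ,…,u}∖M and
∑_{j∈M} x_{π(j)} ≥ v > ∑_{j∈M∖{k}} x_{π(j)} for all k ∈ M, i.e., 𝔐(x,π,ℓ,u,v) ≠ ∅. -/
theorem stmt_5 (N : ℕ) (x : ℕ → ℝ) (hx : ∀ j, 0 ≤ x j)
    (π : Equiv.Perm ℕ) (ℓ u : ℕ) (hl : 1 ≤ ℓ) (hlu : ℓ ≤ u) (huN : u ≤ N)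
    (v : ℝ) (hv0 : 0 < v) (hv : v ≤ ∑ j ∈ Finset.Icc ℓ u, x (π j)) :
    ∃ M ⊆ Finset.Icc ℓ u,
      (∀ j ∈ M, ∀ k ∈ Finset.Icc ℓ u \ M, x (π k) ≤ x (π j)) ∧
      (v ≤ ∑ j ∈ M, x (π j)) ∧
      (∀ k ∈ M, ∑ j ∈ M.erase k, x (π j) < v) := by
  classical
  set I := Finset.Icc ℓ u with hI
  set C : Finset (Finset ℕ) := I.powerset.filter
    (fun S => (∀ j ∈ S, ∀ k ∈ I \ S, x (π k) ≤ x (π j)) ∧ v ≤ ∑ j ∈ S, x (π j)) with hC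
  have hIC : I ∈ C := by
    simp only [hC, Finset.mem_filter, Finset.mem_powerset]
    refine ⟨le_refl _, ?_, hv⟩
    intro j hj k hk
    simp at hk
  obtain ⟨M, hM, hmin⟩ := C.exists_min_image (fun S => S.card) ⟨I, hIC⟩
  simp only [hC, Finset.mem_filter, Finset.mem_powerset] at hM
  obtain ⟨hMI, hgreedy, hsum⟩ := hM
  have hMne : M.Nonempty := by
    rcases M.eq_empty_or_nonempty with h | h
    · exfalso; rw [h] at hsum; simp at hsum; linarith
    · exact h
  obtain ⟨k0, hk0M, hk0min⟩ := M.exists_min_image (fun k => x (π k)) hMne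
  -- the erased set is still greedy
  have hkey : ∑ j ∈ M.erase k0, x (π j) < v := by
    by_contra hge
    push_neg at hge
    have hmem : M.erase k0 ∈ C := by
      simp only [hC, Finset.mem_filter, Finset.mem_powerset]
      refine ⟨(M.erase_subset k0).trans hMI, ?_, hge⟩
      intro j hj k hk
      rw [Finset.mem_sdiff] at hk
      by_cases hkM : k ∈ M
      · have : k = k0 := by
          by_contra hne
          exact hk.2 (Finset.mem_erase.mpr ⟨hne, hkM⟩)
        subst this
        exact hk0min j (Finset.mem_of_mem_erase hj)
      · exact hgreedy j (Finset.mem_of_mem_erase hj) k (Finset.mem_sdiff.mpr ⟨hk.1, hkM⟩)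
    have := hmin _ hmem
    have hcard : (M.erase k0).card < M.card := Finset.card_erase_lt_of_mem hk0M
    omega
  refine ⟨M, hMI, hgreedy, hsum, ?_⟩
  intro k hkM
  have h1 : ∑ j ∈ M.erase k, x (π j) + x (π k) = ∑ j ∈ M, x (π j) :=
    Finset.sum_erase_add _ _ hkM
  have h2 : ∑ j ∈ M.erase k0, x (π j) + x (π k0) = ∑ j ∈ M, x (π j) :=
    Finset.sum_erase_add _ _ hk0M
  have h3 : x (π k0) ≤ x (π k) := hk0min k hkM
  linarith
end

section
/- The minimal marked value x* is well-defined: if M₁ and M₂ both belong to 𝔐(x,π,ℓ,u,v), then min_{j∈M₁} x_{π(j)} = min_{j∈M₂} x_{π(j)}. -/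
lemma stmt_6_aux (x : ℕ → ℝ) (hx : ∀ j, 0 ≤ x j)
    (π : Equiv.Perm ℕ) (ℓ u : ℕ) (v : ℝ)
    (M₁ M₂ : Finset ℕ) (h₁ : M₁.Nonempty) (h₂ : M₂.Nonempty)
    (hs₂ : M₂ ⊆ Finset.Icc ℓ u)
    (ha₁ : ∀ j ∈ M₁, ∀ k ∈ Finset.Icc ℓ u \ M₁, x (π k) ≤ x (π j))
    (hc₁ : ∀ k ∈ M₁, ∑ j ∈ M₁.erase k, x (π j) < v)
    (hb₂ : v ≤ ∑ j ∈ M₂, x (π j)) :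
    ¬ (M₁.inf' h₁ (fun j => x (π j)) < M₂.inf' h₂ (fun j => x (π j))) := by
  intro hlt
  obtain ⟨j₁, hj₁, hj₁val⟩ := M₁.exists_mem_eq_inf' h₁ (fun j => x (π j))
  have hmin : x (π j₁) = M₁.inf' h₁ (fun j => x (π j)) := hj₁val.symm
  have hsub : M₂ ⊆ M₁.erase j₁ := by
    intro j hj
    have hge : M₂.inf' h₂ (fun j => x (π j)) ≤ x (π j) := Finset.inf'_le _ hj
    have hgt : x (π j₁) < x (π j) := lt_of_lt_of_le (hmin ▸ hlt) hge
    have hjM₁ : j ∈ M₁ := by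
      by_contra hnot
      have : x (π j) ≤ x (π j₁) :=
        ha₁ j₁ hj₁ j (Finset.mem_sdiff.mpr ⟨hs₂ hj, hnot⟩)
      linarith
    exact Finset.mem_erase.mpr ⟨fun h => by simp [h] at hgt, hjM₁⟩
  have hle : ∑ j ∈ M₂, x (π j) ≤ ∑ j ∈ M₁.erase j₁, x (π j) :=
    Finset.sum_le_sum_of_subset_of_nonneg hsub (fun i _ _ => hx (π i))
  exact absurd (lt_of_le_of_lt (le_trans hb₂ hle) (hc₁ j₁ hj₁)) (lt_irrefl v)

/-- The minimal marked value x* is well-defined: if M₁ and M₂ both belong to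
𝔐(x,π,ℓ,u,v), then min_{j∈M₁} x_{π(j)} = min_{j∈M₂} x_{π(j)}. -/
theorem stmt_6 (N : ℕ) (x : ℕ → ℝ) (hx : ∀ j, 0 ≤ x j)
    (π : Equiv.Perm ℕ) (ℓ u : ℕ) (hl : 1 ≤ ℓ) (hlu : ℓ ≤ u) (huN : u ≤ N)
    (v : ℝ) (hv0 : 0 < v) (hv : v ≤ ∑ j ∈ Finset.Icc ℓ u, x (π j))
    (M₁ M₂ : Finset ℕ) (h₁ : M₁.Nonempty) (h₂ : M₂.Nonempty)
    (hs₁ : M₁ ⊆ Finset.Icc ℓ u) (hs₂ : M₂ ⊆ Finset.Icc ℓ u)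
    (ha₁ : ∀ j ∈ M₁, ∀ k ∈ Finset.Icc ℓ u \ M₁, x (π k) ≤ x (π j))
    (hb₁ : v ≤ ∑ j ∈ M₁, x (π j))
    (hc₁ : ∀ k ∈ M₁, ∑ j ∈ M₁.erase k, x (π j) < v)
    (ha₂ : ∀ j ∈ M₂, ∀ k ∈ Finset.Icc ℓ u \ M₂, x (π k) ≤ x (π j))
    (hb₂ : v ≤ ∑ j ∈ M₂, x (π j))
    (hc₂ : ∀ k ∈ M₂, ∑ j ∈ M₂.erase k, x (π j) < v) :
    M₁.inf' h₁ (fun j => x (π j)) = M₂.inf' h₂ (fun j => x (π j)) := by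
  have A := stmt_6_aux x hx π ℓ u v M₁ M₂ h₁ h₂ hs₂ ha₁ hc₁ hb₂
  have B := stmt_6_aux x hx π ℓ u v M₂ M₁ h₂ h₁ hs₁ ha₂ hc₂ hb₁
  linarith [lt_or_ge (M₁.inf' h₁ (fun j => x (π j))) (M₂.inf' h₂ (fun j => x (π j)))]
end

section
/- If M₁, M₂ ∈ 𝔐(x,π,ℓ,u,v) and min_{j∈M₁} x_{π(j)} < min_{j∈M₂} x_{π(j)}, then M₂ ⊊ M₁, and this leads to a contradiction v > ∑_{j∈M₂} x_{π(j)} ≥ v; hence the minima are equal. -/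
/-- If M₁, M₂ ∈ 𝔐(x,π,ℓ,u,v) and min_{j∈M₁} x_{π(j)} < min_{j∈M₂} x_{π(j)}, then
M₂ ⊊ M₁, and this leads to the contradiction v > ∑_{j∈M₂} x_{π(j)} ≥ v; hence the
assumption is false. -/
theorem stmt_7 (N : ℕ) (x : ℕ → ℝ) (hx : ∀ j, 0 ≤ x j)
    (π : Equiv.Perm ℕ) (ℓ u : ℕ) (hl : 1 ≤ ℓ) (hlu : ℓ ≤ u) (huN : u ≤ N)
    (v : ℝ) (hv0 : 0 < v) (hv : v ≤ ∑ j ∈ Finset.Icc ℓ u, x (π j))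
    (M₁ M₂ : Finset ℕ) (h₁ : M₁.Nonempty) (h₂ : M₂.Nonempty)
    (hs₁ : M₁ ⊆ Finset.Icc ℓ u) (hs₂ : M₂ ⊆ Finset.Icc ℓ u)
    (ha₁ : ∀ j ∈ M₁, ∀ k ∈ Finset.Icc ℓ u \ M₁, x (π k) ≤ x (π j))
    (hb₁ : v ≤ ∑ j ∈ M₁, x (π j))
    (hc₁ : ∀ k ∈ M₁, ∑ j ∈ M₁.erase k, x (π j) < v)
    (ha₂ : ∀ j ∈ M₂, ∀ k ∈ Finset.Icc ℓ u \ M₂, x (π k) ≤ x (π j))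
    (hb₂ : v ≤ ∑ j ∈ M₂, x (π j))
    (hc₂ : ∀ k ∈ M₂, ∑ j ∈ M₂.erase k, x (π j) < v)
    (hlt : M₁.inf' h₁ (fun j => x (π j)) < M₂.inf' h₂ (fun j => x (π j))) :
    M₂ ⊂ M₁ ∧ False := by
  obtain ⟨m₁, hm₁, hmeq⟩ := M₁.exists_mem_eq_inf' h₁ (fun j => x (π j))
  have hsub : M₂ ⊆ M₁ := by
    intro k hk
    by_contra hkM
    have h1 : x (π k) ≤ x (π m₁) :=
      ha₁ m₁ hm₁ k (Finset.mem_sdiff.2 ⟨hs₂ hk, hkM⟩)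
    have h2 : M₂.inf' h₂ (fun j => x (π j)) ≤ x (π k) := Finset.inf'_le _ hk
    rw [hmeq] at hlt
    linarith
  have hne : M₂ ≠ M₁ := by
    rintro rfl
    exact absurd hlt (lt_irrefl _)
  have hssub : M₂ ⊂ M₁ := ⟨hsub, fun h => hne (le_antisymm hsub h)⟩
  refine ⟨hssub, ?_⟩
  obtain ⟨t, htM₁, htM₂⟩ := Finset.exists_of_ssubset hssub
  have hsub' : M₂ ⊆ M₁.erase t := fun k hk =>
    Finset.mem_erase.2 ⟨fun h => htM₂ (h ▸ hk), hsub hk⟩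
  have hle : ∑ j ∈ M₂, x (π j) ≤ ∑ j ∈ M₁.erase t, x (π j) :=
    Finset.sum_le_sum_of_subset_of_nonneg hsub' (fun j _ _ => hx _)
  have := hc₁ t htM₁
  linarith
end

section
/- Subproblem decomposition: if the admissibility condition 0 < v = θ·∑_{j=1}^N x_j − ∑_{j=1}^{ℓ−1} x_{π(j)} ≤ ∑_{j=ℓ}^u x_{π(j)} holds together with the partial ordering x_{π(j)} > x_{π(k)} for all 1 ≤ j < ℓ ≤ k ≤ N and all 1 ≤ j ≤ u < k ≤ N, then for every M' ∈ 𝔐(x,π,ℓ,u,v), the set {1,…,ℓ−1} ∪ M' belongs to 𝔐(x,π,1,N,θ·∑_{j=1}^N x_j). -/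
/-- Subproblem decomposition: under admissibility and partial ordering, for every
M' ∈ 𝔐(x,π,ℓ,u,v), the set {1,…,ℓ−1} ∪ M' belongs to 𝔐(x,π,1,N,θ·∑ x_j). -/
theorem stmt_8 (N : ℕ) (θ : ℝ) (hθ0 : 0 < θ) (hθ1 : θ < 1) (x : ℕ → ℝ)
    (hx : ∀ j, 0 ≤ x j) (hx0 : ∃ j ∈ Finset.Icc 1 N, x j ≠ 0)
    (π : Equiv.Perm ℕ) (ℓ u : ℕ) (hl : 1 ≤ ℓ) (hlu : ℓ ≤ u) (huN : u ≤ N)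
    (v : ℝ)
    (hord1 : ∀ j k : ℕ, 1 ≤ j → j < ℓ → ℓ ≤ k → k ≤ N → x (π k) < x (π j))
    (hord2 : ∀ j k : ℕ, 1 ≤ j → j ≤ u → u < k → k ≤ N → x (π k) < x (π j))
    (hv0 : 0 < v)
    (hveq : v = θ * ∑ j ∈ Finset.Icc 1 N, x j - ∑ j ∈ Finset.Icc 1 (ℓ - 1), x (π j))
    (hvle : v ≤ ∑ j ∈ Finset.Icc ℓ u, x (π j)) :
    ∀ M' ⊆ Finset.Icc ℓ u,
      (∀ j ∈ M', ∀ k ∈ Finset.Icc ℓ u \ M', x (π k) ≤ x (π j)) →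
      (v ≤ ∑ j ∈ M', x (π j)) →
      (∀ k ∈ M', ∑ j ∈ M'.erase k, x (π j) < v) →
      (Finset.Icc 1 (ℓ - 1) ∪ M') ⊆ Finset.Icc 1 N ∧
      (∀ j ∈ Finset.Icc 1 (ℓ - 1) ∪ M',
        ∀ k ∈ Finset.Icc 1 N \ (Finset.Icc 1 (ℓ - 1) ∪ M'), x (π k) ≤ x (π j)) ∧
      (θ * ∑ j ∈ Finset.Icc 1 N, x j ≤ ∑ j ∈ Finset.Icc 1 (ℓ - 1) ∪ M', x (π j)) ∧
      (∀ k ∈ Finset.Icc 1 (ℓ - 1) ∪ M',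
        ∑ j ∈ (Finset.Icc 1 (ℓ - 1) ∪ M').erase k, x (π j)
          < θ * ∑ j ∈ Finset.Icc 1 N, x j) := by
  intro M' hM'sub hord hvleM hmin
  have hsubN : M' ⊆ Finset.Icc 1 N := by
    intro j hj
    have := hM'sub hj
    simp only [Finset.mem_Icc] at this ⊢
    omega
  have hdisj : Disjoint (Finset.Icc 1 (ℓ - 1)) M' := by
    rw [Finset.disjoint_left]
    intro j hj hj'
    have h1 := Finset.mem_Icc.mp hj
    have h2 := Finset.mem_Icc.mp (hM'sub hj')
    omega
  have hsum_union : ∑ j ∈ Finset.Icc 1 (ℓ - 1) ∪ M', x (π j)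
      = (∑ j ∈ Finset.Icc 1 (ℓ - 1), x (π j)) + ∑ j ∈ M', x (π j) :=
    Finset.sum_union hdisj
  have hθS : θ * ∑ j ∈ Finset.Icc 1 N, x j
      = v + ∑ j ∈ Finset.Icc 1 (ℓ - 1), x (π j) := by linarith
  refine ⟨?_, ?_, ?_, ?_⟩
  · intro j hj
    rcases Finset.mem_union.mp hj with h | h
    · have := Finset.mem_Icc.mp h
      simp only [Finset.mem_Icc]; omega
    · exact hsubN h
  · intro j hj k hk
    rcases Finset.mem_sdiff.mp hk with ⟨hk1, hk2⟩
    have hk1' := Finset.mem_Icc.mp hk1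
    have hkℓ : ℓ ≤ k := by
      by_contra h
      exact hk2 (Finset.mem_union_left _ (Finset.mem_Icc.mpr (by omega)))
    rcases Finset.mem_union.mp hj with h | h
    · have hj' := Finset.mem_Icc.mp h
      exact le_of_lt (hord1 j k hj'.1 (by omega) hkℓ hk1'.2)
    · have hj' := Finset.mem_Icc.mp (hM'sub h)
      by_cases hku : k ≤ u
      · exact hord j h k (Finset.mem_sdiff.mpr ⟨Finset.mem_Icc.mpr ⟨hkℓ, hku⟩,
          fun hkM => hk2 (Finset.mem_union_right _ hkM)⟩)
      · exact le_of_lt (hord2 j k (by omega) hj'.2 (by omega) hk1'.2)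
  · rw [hsum_union, hθS]; linarith
  · intro k hk
    rcases Finset.mem_union.mp hk with h | h
    · -- k in Icc 1 (ℓ-1)
      have hk' := Finset.mem_Icc.mp h
      have hkU : k ∈ Finset.Icc 1 (ℓ - 1) ∪ M' := hk
      have herase : ∑ j ∈ (Finset.Icc 1 (ℓ - 1) ∪ M').erase k, x (π j)
          = (∑ j ∈ Finset.Icc 1 (ℓ - 1) ∪ M', x (π j)) - x (π k) := by
        rw [← Finset.sum_erase_add _ _ hkU]; ring
      -- M' nonempty
      obtain ⟨k', hk'M⟩ : M'.Nonempty := by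
        rcases M'.eq_empty_or_nonempty with he | hne
        · exfalso; rw [he] at hvleM; simp at hvleM; linarith
        · exact hne
      have hk'' := Finset.mem_Icc.mp (hM'sub hk'M)
      have hsumM' : ∑ j ∈ M', x (π j) < v + x (π k') := by
        have := hmin k' hk'M
        have h2 : ∑ j ∈ M'.erase k', x (π j) + x (π k') = ∑ j ∈ M', x (π j) :=
          Finset.sum_erase_add _ _ hk'M
        linarith
      have hlt : x (π k') < x (π k) := hord1 k k' hk'.1 (by omega) hk''.1 (by omega)
      rw [herase, hsum_union, hθS]
      linarith
    · -- k in M'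
      have hkn : k ∉ Finset.Icc 1 (ℓ - 1) := Finset.disjoint_right.mp hdisj h
      have herase : (Finset.Icc 1 (ℓ - 1) ∪ M').erase k
          = Finset.Icc 1 (ℓ - 1) ∪ M'.erase k := by
        ext a
        simp only [Finset.mem_erase, Finset.mem_union]
        constructor
        · rintro ⟨ha, hb | hb⟩
          · exact Or.inl hb
          · exact Or.inr ⟨ha, hb⟩
        · rintro (ha | ⟨ha, hb⟩)
          · exact ⟨fun he => hkn (he ▸ ha), Or.inl ha⟩
          · exact ⟨ha, Or.inr hb⟩
      have hdisj' : Disjoint (Finset.Icc 1 (ℓ - 1)) (M'.erase k) :=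
        hdisj.mono_right (Finset.erase_subset _ _)
      rw [herase, Finset.sum_union hdisj', hθS]
      have := hmin k h
      linarith
end

section
/- If M ∈ 𝔐(x,π,1,N,θ·∑_{j=1}^N x_j), then M' := π(M) = {π(j) : j ∈ M} satisfies the Dörfler criterion θ·∑_{j=1}^N x_j ≤ ∑_{j∈M'} x_j with minimal cardinality #M' = N_min. -/
/-- If M ∈ 𝔐(x,π,1,N,θ·∑ x_j), then M' := π(M) satisfies the Dörfler criterion
θ·∑ x_j ≤ ∑_{j∈M'} x_j with minimal cardinality #M' = N_min. -/
theorem stmt_9 (N : ℕ) (θ : ℝ) (hθ0 : 0 < θ) (hθ1 : θ < 1) (x : ℕ → ℝ)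
    (hx : ∀ j ∈ Finset.Icc 1 N, 0 ≤ x j)
    (hx0 : ∃ j ∈ Finset.Icc 1 N, x j ≠ 0)
    (π : Equiv.Perm ℕ) (hπ : ∀ j ∈ Finset.Icc 1 N, π j ∈ Finset.Icc 1 N)
    (M : Finset ℕ) (hMsub : M ⊆ Finset.Icc 1 N)
    (ha : ∀ j ∈ M, ∀ k ∈ Finset.Icc 1 N \ M, x (π k) ≤ x (π j))
    (hb : θ * ∑ j ∈ Finset.Icc 1 N, x j ≤ ∑ j ∈ M, x (π j))
    (hc : ∀ k ∈ M, ∑ j ∈ M.erase k, x (π j) < θ * ∑ j ∈ Finset.Icc 1 N, x j) :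
    (θ * ∑ j ∈ Finset.Icc 1 N, x j ≤ ∑ j ∈ M.image ⇑π, x j) ∧
    (M.image ⇑π).card = M.card ∧
    (∀ M' ⊆ Finset.Icc 1 N,
      θ * ∑ j ∈ Finset.Icc 1 N, x j ≤ ∑ j ∈ M', x j →
      (M.image ⇑π).card ≤ M'.card) := by
  have hcardim : (M.image ⇑π).card = M.card :=
    Finset.card_image_of_injective _ π.injective
  have hsumim : ∑ j ∈ M.image ⇑π, x j = ∑ j ∈ M, x (π j) :=
    Finset.sum_image (fun a _ b _ h => π.injective h)
  refine ⟨by rw [hsumim]; exact hb, hcardim, ?_⟩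
  intro M' hM'sub hM'
  rw [hcardim]
  by_contra hlt
  push_neg at hlt
  set S := Finset.Icc 1 N with hS
  have hSim : S.image ⇑π = S := by
    apply Finset.eq_of_subset_of_card_le
    · intro y hy
      obtain ⟨a, ha', rfl⟩ := Finset.mem_image.1 hy
      exact hπ a ha'
    · rw [Finset.card_image_of_injective _ π.injective]
  set K := M'.image ⇑π.symm with hK
  have hKS : K ⊆ S := by
    intro k hk
    obtain ⟨a, haM', rfl⟩ := Finset.mem_image.1 hk
    have : a ∈ S.image ⇑π := by rw [hSim]; exact hM'sub haM'
    obtain ⟨b, hbS, rfl⟩ := Finset.mem_image.1 this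
    simpa using hbS
  have hKsum : ∑ j ∈ K, x (π j) = ∑ j ∈ M', x j := by
    rw [Finset.sum_image (fun a _ b _ h => (Equiv.injective _) h)]
    simp
  have hKcard : K.card = M'.card :=
    Finset.card_image_of_injective _ (Equiv.injective _)
  set A := K ∩ M with hA
  set B := K \ M with hB
  have hABcard : A.card + B.card = K.card := by
    rw [Finset.card_inter_add_card_sdiff]
  have hAM : A ⊆ M := Finset.inter_subset_right
  have hAMcard : A.card ≤ M.card := Finset.card_le_card hAM
  have hKM : K.card < M.card := by omega
  have hBle : B.card ≤ (M \ A).card := by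
    rw [Finset.card_sdiff_of_subset hAM]; omega
  obtain ⟨T, hTsub, hTcard⟩ := Finset.exists_subset_card_eq hBle
  have hATM : A ∪ T ⊆ M := Finset.union_subset hAM (hTsub.trans (Finset.sdiff_subset))
  have hATcard : (A ∪ T).card < M.card := by
    have h1 := Finset.card_union_le A T
    omega
  obtain ⟨m, hmM, hmAT⟩ : ∃ m ∈ M, m ∉ A ∪ T := by
    by_contra h
    push_neg at h
    exact absurd (Finset.card_le_card h) (by omega)
  -- sum over B ≤ sum over T
  have hBT : ∑ j ∈ B, x (π j) ≤ ∑ j ∈ T, x (π j) := by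
    rcases Finset.eq_empty_or_nonempty T with hTe | hTne
    · have hBe : B = ∅ := Finset.card_eq_zero.1 (by rw [← hTcard, hTe]; simp)
      simp [hBe, hTe]
    · obtain ⟨t₀, ht₀T, ht₀min⟩ := Finset.exists_min_image T (fun j => x (π j)) hTne
      have ht₀M : t₀ ∈ M := hATM (Finset.mem_union_right _ ht₀T)
      have h1 : ∑ j ∈ B, x (π j) ≤ B.card • x (π t₀) := by
        apply Finset.sum_le_card_nsmul
        intro b hbB
        have hbSM : b ∈ S \ M := by
          rw [Finset.mem_sdiff]
          exact ⟨hKS (Finset.sdiff_subset hbB), (Finset.mem_sdiff.1 hbB).2⟩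
        exact ha t₀ ht₀M b hbSM
      have h2 : T.card • x (π t₀) ≤ ∑ j ∈ T, x (π j) :=
        Finset.card_nsmul_le_sum T _ _ ht₀min
      calc ∑ j ∈ B, x (π j) ≤ B.card • x (π t₀) := h1
        _ = T.card • x (π t₀) := by rw [hTcard]
        _ ≤ ∑ j ∈ T, x (π j) := h2
  have hdisj : Disjoint A T := by
    have := hTsub
    exact Finset.disjoint_left.2 fun a haA haT =>
      (Finset.mem_sdiff.1 (hTsub haT)).2 haA
  have hAT : ∑ j ∈ A ∪ T, x (π j) = ∑ j ∈ A, x (π j) + ∑ j ∈ T, x (π j) :=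
    Finset.sum_union hdisj
  have hATerase : A ∪ T ⊆ M.erase m := by
    intro a haAT
    exact Finset.mem_erase.2 ⟨fun h => hmAT (h ▸ haAT), hATM haAT⟩
  have hsub : ∑ j ∈ A ∪ T, x (π j) ≤ ∑ j ∈ M.erase m, x (π j) := by
    apply Finset.sum_le_sum_of_subset_of_nonneg hATerase
    intro j hjM _
    exact hx (π j) (hπ j (hMsub (Finset.mem_of_mem_erase hjM)))
  have hKsplit : ∑ j ∈ A, x (π j) + ∑ j ∈ B, x (π j) = ∑ j ∈ K, x (π j) :=
    Finset.sum_inter_add_sum_sdiff K M _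
  have hfinal : ∑ j ∈ M', x j < θ * ∑ j ∈ S, x j := by
    calc ∑ j ∈ M', x j = ∑ j ∈ K, x (π j) := hKsum.symm
      _ = ∑ j ∈ A, x (π j) + ∑ j ∈ B, x (π j) := hKsplit.symm
      _ ≤ ∑ j ∈ A, x (π j) + ∑ j ∈ T, x (π j) := by linarith
      _ = ∑ j ∈ A ∪ T, x (π j) := hAT.symm
      _ ≤ ∑ j ∈ M.erase m, x (π j) := hsub
      _ < θ * ∑ j ∈ S, x j := hc m hmM
  linarith
end

section
/- Partition-based termination criterion: suppose the array x∘π restricted to {ℓ,…,u} is partitioned with indices g < s such that x_{π(j)} > p* for ℓ ≤ j ≤ g, x_{π(j)} = p* for g < j < s, and x_{π(j)} < p* for s ≤ j ≤ u. If σ_g := ∑_{j=ℓ}^g x_{π(j)} < v ≤ σ_g + (s−g−1)·p*, then n := g + ⌈(v−σ_g)/p*⌉ satisfies g < n < s and {ℓ,…,n} ∈ 𝔐(x,π,ℓ,u,v). -/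
/-- Partition-based termination criterion: if x∘π on {ℓ,…,u} is partitioned at a pivot
value p* with indices g < s and σ_g := ∑_{j=ℓ}^g x_{π(j)} satisfies
σ_g < v ≤ σ_g + (s−g−1)·p*, then n := g + ⌈(v−σ_g)/p*⌉ satisfies g < n < s and
{ℓ,…,n} ∈ 𝔐(x,π,ℓ,u,v). -/
theorem stmt_10 (N : ℕ) (x : ℕ → ℝ) (hx : ∀ j, 0 ≤ x j)
    (π : Equiv.Perm ℕ) (ℓ u g s : ℕ) (hl : 1 ≤ ℓ) (hlu : ℓ ≤ u) (huN : u ≤ N)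
    (v : ℝ) (hv0 : 0 < v) (hv : v ≤ ∑ j ∈ Finset.Icc ℓ u, x (π j))
    (pstar : ℝ) (hp0 : 0 < pstar)
    (hg1 : ℓ ≤ g + 1) (hgs : g < s) (hs1 : s ≤ u + 1)
    (hpart1 : ∀ j, ℓ ≤ j → j ≤ g → pstar < x (π j))
    (hpart2 : ∀ j, g < j → j < s → x (π j) = pstar)
    (hpart3 : ∀ j, s ≤ j → j ≤ u → x (π j) < pstar)
    (hσ1 : ∑ j ∈ Finset.Icc ℓ g, x (π j) < v)
    (hσ2 : v ≤ ∑ j ∈ Finset.Icc ℓ g, x (π j) + ((s - g - 1 : ℕ) : ℝ) * pstar) :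
    ∀ n : ℕ, n = g + (⌈(v - ∑ j ∈ Finset.Icc ℓ g, x (π j)) / pstar⌉).toNat →
      g < n ∧ n < s ∧
      Finset.Icc ℓ n ⊆ Finset.Icc ℓ u ∧
      (∀ j ∈ Finset.Icc ℓ n, ∀ k ∈ Finset.Icc ℓ u \ Finset.Icc ℓ n,
        x (π k) ≤ x (π j)) ∧
      (v ≤ ∑ j ∈ Finset.Icc ℓ n, x (π j)) ∧
      (∀ k ∈ Finset.Icc ℓ n, ∑ j ∈ (Finset.Icc ℓ n).erase k, x (π j) < v) := by
  intro n hn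
  set σ := ∑ j ∈ Finset.Icc ℓ g, x (π j) with hσ
  set c : ℕ := (⌈(v - σ) / pstar⌉).toNat with hc
  have hpos : 0 < (v - σ) / pstar := div_pos (by linarith) hp0
  have hceil_pos : 0 < ⌈(v - σ) / pstar⌉ := Int.ceil_pos.mpr hpos
  have hc1 : 1 ≤ c := by
    have := Int.toNat_of_nonneg hceil_pos.le
    omega
  have hccast : ((c : ℤ) : ℝ) = (⌈(v - σ) / pstar⌉ : ℝ) := by
    rw [hc, Int.toNat_of_nonneg hceil_pos.le]
  have hcge : (v - σ) / pstar ≤ (c : ℝ) := by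
    push_cast at hccast; rw [hccast]; exact Int.le_ceil _
  have hclt : (c : ℝ) - 1 < (v - σ) / pstar := by
    push_cast at hccast; rw [hccast]
    exact sub_lt_iff_lt_add.mpr (by
      have := Int.ceil_lt_add_one ((v - σ) / pstar); linarith)
  -- c ≤ s - g - 1
  have hcle : c ≤ s - g - 1 := by
    have h1 : (v - σ) / pstar ≤ ((s - g - 1 : ℕ) : ℝ) := by
      rw [div_le_iff₀ hp0]; linarith
    have h2 : ⌈(v - σ) / pstar⌉ ≤ ((s - g - 1 : ℕ) : ℤ) := by
      rw [Int.ceil_le]; push_cast; exact h1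
    omega
  have hgn : g < n := by omega
  have hns : n < s := by omega
  have hnu : n ≤ u := by omega
  -- sum decomposition
  have hdecomp : ∑ j ∈ Finset.Icc ℓ n, x (π j) = σ + (c : ℝ) * pstar := by
    have e1 : Finset.Icc ℓ n = Finset.Ioc (ℓ - 1) n := by
      ext j; simp [Finset.mem_Icc, Finset.mem_Ioc]; omega
    have e2 : Finset.Icc ℓ g = Finset.Ioc (ℓ - 1) g := by
      ext j; simp [Finset.mem_Icc, Finset.mem_Ioc]; omega
    have e3 : (Finset.Ioc (ℓ-1) g) ∪ (Finset.Ioc g n) = Finset.Ioc (ℓ-1) n := by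
      apply Finset.Ioc_union_Ioc_eq_Ioc (by omega) (by omega)
    have hdisj : Disjoint (Finset.Ioc (ℓ-1) g) (Finset.Ioc g n) := by
      rw [Finset.disjoint_left]; intro a ha hb
      simp [Finset.mem_Ioc] at ha hb; omega
    have hsum2 : ∑ j ∈ Finset.Ioc g n, x (π j) = (c : ℝ) * pstar := by
      have : ∀ j ∈ Finset.Ioc g n, x (π j) = pstar := by
        intro j hj; simp [Finset.mem_Ioc] at hj
        exact hpart2 j hj.1 (by omega)
      rw [Finset.sum_congr rfl this, Finset.sum_const, Nat.card_Ioc, nsmul_eq_mul]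
      rw [show n - g = c by omega]
    rw [e1, ← e3, Finset.sum_union hdisj, ← e2, ← hσ, hsum2]
  refine ⟨hgn, hns, ?_, ?_, ?_, ?_⟩
  · exact Finset.Icc_subset_Icc_right hnu
  · intro j hj k hk
    simp only [Finset.mem_sdiff, Finset.mem_Icc] at hj hk
    have hjp : pstar ≤ x (π j) := by
      rcases le_or_gt j g with h | h
      · exact (hpart1 j hj.1 h).le
      · exact (hpart2 j h (by omega)).ge
    have hkn : n < k := by omega
    rcases lt_or_ge k s with h | h
    · rw [hpart2 k (by omega) h]; exact hjp
    · linarith [hpart3 k h (by omega)]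
  · rw [hdecomp]
    have : v - σ ≤ (c : ℝ) * pstar := by
      rw [div_le_iff₀ hp0] at hcge; linarith
    linarith
  · intro k hk
    have hkmem := hk
    simp only [Finset.mem_Icc] at hkmem
    have hkp : pstar ≤ x (π k) := by
      rcases le_or_gt k g with h | h
      · exact (hpart1 k hkmem.1 h).le
      · exact (hpart2 k h (by omega)).ge
    have herase : ∑ j ∈ (Finset.Icc ℓ n).erase k, x (π j)
        = (∑ j ∈ Finset.Icc ℓ n, x (π j)) - x (π k) := by
      rw [Finset.sum_erase_eq_sub hk]
    rw [herase, hdecomp]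
    have : ((c : ℝ) - 1) * pstar < v - σ := (lt_div_iff₀ hp0).mp hclt
    nlinarith
end

section
/- Pivot termination equivalence: in the partitioned setting (x_{π(j)} > p* for ℓ ≤ j ≤ g, = p* for g < j < s, < p* for s ≤ j ≤ u with g < s, p* > 0), the inequality σ_g < v ≤ σ_g + (s−g−1)·p* holds (with σ_g = ∑_{j=ℓ}^g x_{π(j)}) if and only if p* = x*(x,π,ℓ,u,v), the common minimal value min_{j∈M} x_{π(j)} over M ∈ 𝔐(x,π,ℓ,u,v). -/
/-- Pivot termination equivalence: in the partitioned setting, σ_g < v ≤ σ_g + (s−g−1)·p*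
holds if and only if p* equals x*(x,π,ℓ,u,v), the common minimal value
min_{j∈M} x_{π(j)} over M ∈ 𝔐(x,π,ℓ,u,v). -/
theorem stmt_11 (N : ℕ) (x : ℕ → ℝ) (hx : ∀ j, 0 ≤ x j)
    (π : Equiv.Perm ℕ) (ℓ u g s : ℕ) (hl : 1 ≤ ℓ) (hlu : ℓ ≤ u) (huN : u ≤ N)
    (v : ℝ) (hv0 : 0 < v) (hv : v ≤ ∑ j ∈ Finset.Icc ℓ u, x (π j))
    (pstar : ℝ) (hp0 : 0 < pstar)
    (hg1 : ℓ ≤ g + 1) (hgs : g < s) (hs1 : s ≤ u + 1)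
    (hpart1 : ∀ j, ℓ ≤ j → j ≤ g → pstar < x (π j))
    (hpart2 : ∀ j, g < j → j < s → x (π j) = pstar)
    (hpart3 : ∀ j, s ≤ j → j ≤ u → x (π j) < pstar)
    (xstar : ℝ)
    (hMne : ∃ M ⊆ Finset.Icc ℓ u,
      (∀ j ∈ M, ∀ k ∈ Finset.Icc ℓ u \ M, x (π k) ≤ x (π j)) ∧
      (v ≤ ∑ j ∈ M, x (π j)) ∧
      (∀ k ∈ M, ∑ j ∈ M.erase k, x (π j) < v))
    (hxstar : ∀ M, M ⊆ Finset.Icc ℓ u →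
      (∀ j ∈ M, ∀ k ∈ Finset.Icc ℓ u \ M, x (π k) ≤ x (π j)) →
      (v ≤ ∑ j ∈ M, x (π j)) →
      (∀ k ∈ M, ∑ j ∈ M.erase k, x (π j) < v) →
      ∀ hne : M.Nonempty, M.inf' hne (fun j => x (π j)) = xstar) :
    (∑ j ∈ Finset.Icc ℓ g, x (π j) < v ∧
      v ≤ ∑ j ∈ Finset.Icc ℓ g, x (π j) + ((s - g - 1 : ℕ) : ℝ) * pstar)
    ↔ pstar = xstar := by
  classical
  have key : ∀ m : ℕ, m ≤ s - g - 1 →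
      ∑ j ∈ Finset.Icc ℓ (g + m), x (π j)
        = (∑ j ∈ Finset.Icc ℓ g, x (π j)) + (m : ℝ) * pstar := by
    intro m hm
    have h1 : Finset.Icc ℓ (g + m) = Finset.Icc ℓ g ∪ Finset.Ioc g (g + m) := by
      ext j; simp only [Finset.mem_Icc, Finset.mem_union, Finset.mem_Ioc]; omega
    have hdisj : Disjoint (Finset.Icc ℓ g) (Finset.Ioc g (g + m)) := by
      simp only [Finset.disjoint_left, Finset.mem_Icc, Finset.mem_Ioc]
      intro a ha hb; omega
    rw [h1, Finset.sum_union hdisj]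
    congr 1
    have : ∀ j ∈ Finset.Ioc g (g + m), x (π j) = pstar := by
      intro j hj
      rw [Finset.mem_Ioc] at hj
      exact hpart2 j hj.1 (by omega)
    rw [Finset.sum_congr rfl this, Finset.sum_const, Nat.card_Ioc]
    simp [nsmul_eq_mul]
  constructor
  · rintro ⟨h1, h2⟩
    have hex : ∃ m : ℕ, v ≤ (∑ j ∈ Finset.Icc ℓ g, x (π j)) + (m : ℝ) * pstar :=
      ⟨s - g - 1, h2⟩
    set m := Nat.find hex with hmdef
    have hmspec := Nat.find_spec hex
    have hmle : m ≤ s - g - 1 := Nat.find_min' hex h2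
    have hm1 : 1 ≤ m := by
      rcases Nat.eq_zero_or_pos m with h | h
      · exfalso
        have := hmspec
        rw [← hmdef, h] at this
        simp at this
        linarith
      · exact h
    have hmmin : ¬ v ≤ (∑ j ∈ Finset.Icc ℓ g, x (π j)) + ((m - 1 : ℕ) : ℝ) * pstar :=
      Nat.find_min hex (by omega)
    set M := Finset.Icc ℓ (g + m) with hM
    have hsum : ∑ j ∈ M, x (π j) = (∑ j ∈ Finset.Icc ℓ g, x (π j)) + (m : ℝ) * pstar :=
      key m hmle
    have hsub : M ⊆ Finset.Icc ℓ u := by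
      apply Finset.Icc_subset_Icc le_rfl; omega
    -- every element of M has value ≥ pstar
    have hge : ∀ j ∈ M, pstar ≤ x (π j) := by
      intro j hj
      rw [hM, Finset.mem_Icc] at hj
      rcases le_or_gt j g with h | h
      · exact le_of_lt (hpart1 j hj.1 h)
      · exact le_of_eq (hpart2 j h (by omega)).symm
    have hcond2 : ∀ j ∈ M, ∀ k ∈ Finset.Icc ℓ u \ M, x (π k) ≤ x (π j) := by
      intro j hj k hk
      rw [Finset.mem_sdiff] at hk
      obtain ⟨hk1, hk2⟩ := hk
      rw [Finset.mem_Icc] at hk1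
      have hkgm : g + m < k := by
        by_contra h
        exact hk2 (by rw [hM, Finset.mem_Icc]; omega)
      have hkle : x (π k) ≤ pstar := by
        rcases lt_or_ge k s with h | h
        · exact le_of_eq (hpart2 k (by omega) h)
        · exact le_of_lt (hpart3 k h hk1.2)
      exact le_trans hkle (hge j hj)
    have hcond4 : ∀ k ∈ M, ∑ j ∈ M.erase k, x (π j) < v := by
      intro k hk
      have herase : x (π k) + ∑ j ∈ M.erase k, x (π j) = ∑ j ∈ M, x (π j) :=
        Finset.add_sum_erase M (fun j => x (π j)) hk
      have : ∑ j ∈ M.erase k, x (π j) = ∑ j ∈ M, x (π j) - x (π k) := by linarith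
      rw [this, hsum]
      have hkp := hge k hk
      have hcast : ((m - 1 : ℕ) : ℝ) = (m : ℝ) - 1 := by
        have : (m : ℝ) ≥ 1 := by exact_mod_cast hm1
        push_cast [hm1]; ring
      rw [hcast] at hmmin
      push_neg at hmmin
      nlinarith
    have hne : M.Nonempty := ⟨g + m, by rw [hM, Finset.mem_Icc]; omega⟩
    have hinf := hxstar M hsub hcond2 (hsum ▸ hmspec) hcond4 hne
    rw [← hinf]
    apply le_antisymm
    · exact Finset.le_inf' hne _ hge
    · have hmem : g + 1 ∈ M := by rw [hM, Finset.mem_Icc]; omega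
      have : M.inf' hne (fun j => x (π j)) ≤ x (π (g + 1)) := Finset.inf'_le _ hmem
      have hval : x (π (g + 1)) = pstar := hpart2 (g + 1) (by omega) (by omega)
      linarith
  · intro hps
    obtain ⟨M, hsub, hcond2, hcond3, hcond4⟩ := hMne
    have hne : M.Nonempty := by
      rcases Finset.eq_empty_or_nonempty M with h | h
      · exfalso; rw [h] at hcond3; simp at hcond3; linarith
      · exact h
    have hinf : M.inf' hne (fun j => x (π j)) = pstar := by
      rw [hxstar M hsub hcond2 hcond3 hcond4 hne, ← hps]
    -- all elements ≥ pstar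
    have hge : ∀ j ∈ M, pstar ≤ x (π j) := by
      intro j hj
      rw [← hinf]
      exact Finset.inf'_le _ hj
    -- some element attains pstar
    obtain ⟨j0, hj0M, hj0⟩ := Finset.exists_mem_eq_inf' hne (fun j => x (π j))
    rw [hinf] at hj0
    -- every j in M satisfies j < s
    have hlts : ∀ j ∈ M, j < s := by
      intro j hj
      by_contra h
      push_neg at h
      have hju := Finset.mem_Icc.mp (hsub hj)
      have := hpart3 j h hju.2
      have := hge j hj
      linarith
    -- Icc ℓ g ⊆ M
    have hIcc : Finset.Icc ℓ g ⊆ M := by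
      intro j hj
      rw [Finset.mem_Icc] at hj
      by_contra hjM
      have hjin : j ∈ Finset.Icc ℓ u \ M := by
        rw [Finset.mem_sdiff, Finset.mem_Icc]
        exact ⟨⟨hj.1, by omega⟩, hjM⟩
      have h1 := hcond2 j0 hj0M j hjin
      have h2 := hpart1 j hj.1 hj.2
      linarith
    -- j0 ∉ Icc ℓ g
    have hj0notg : j0 ∉ Finset.Icc ℓ g := by
      intro h
      rw [Finset.mem_Icc] at h
      have := hpart1 j0 h.1 h.2
      linarith [hj0.symm]
    set T := M \ Finset.Icc ℓ g with hT
    have hTval : ∀ j ∈ T, x (π j) = pstar := by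
      intro j hj
      rw [hT, Finset.mem_sdiff, Finset.mem_Icc] at hj
      have hju := Finset.mem_Icc.mp (hsub hj.1)
      have hjs := hlts j hj.1
      exact hpart2 j (by omega) hjs
    have hsumM : ∑ j ∈ M, x (π j)
        = (∑ j ∈ Finset.Icc ℓ g, x (π j)) + (T.card : ℝ) * pstar := by
      have := Finset.sum_sdiff (f := fun j => x (π j)) hIcc
      rw [← this, Finset.sum_congr rfl hTval, Finset.sum_const, nsmul_eq_mul]
      ring
    have hTcard : T.card ≤ s - g - 1 := by
      have hTs : T ⊆ Finset.Icc (g + 1) (s - 1) := by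
        intro j hj
        have hjv := hTval j hj
        rw [hT, Finset.mem_sdiff, Finset.mem_Icc] at hj
        have hju := Finset.mem_Icc.mp (hsub hj.1)
        have hjs := hlts j hj.1
        rw [Finset.mem_Icc]
        omega
      have := Finset.card_le_card hTs
      rw [Nat.card_Icc] at this
      omega
    have hTne : j0 ∈ T := by
      rw [hT, Finset.mem_sdiff]; exact ⟨hj0M, hj0notg⟩
    constructor
    · -- σ_g < v
      have h1 := hcond4 j0 hj0M
      have h2 : (∑ j ∈ Finset.Icc ℓ g, x (π j)) ≤ ∑ j ∈ M.erase j0, x (π j) := by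
        apply Finset.sum_le_sum_of_subset_of_nonneg
        · intro j hj
          rw [Finset.mem_erase]
          refine ⟨?_, hIcc hj⟩
          intro h; rw [h] at hj; exact hj0notg hj
        · intro j _ _; exact hx (π j)
      linarith
    · have hc : (T.card : ℝ) ≤ ((s - g - 1 : ℕ) : ℝ) := by exact_mod_cast hTcard
      have := hcond3
      rw [hsumM] at this
      nlinarith
end

section
/- For every M ∈ 𝔐(x,π,ℓ,u,v) in the partitioned setting (entries > p* on {ℓ,…,g}, = p* on {g+1,…,s−1}, < p* on {s,…,u}, with p* = x*(x,π,ℓ,u,v)), it holds that {ℓ,…,g} ⊊ M ⊆ {ℓ,…,s−1}. -/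
/-- For every M ∈ 𝔐(x,π,ℓ,u,v) in the partitioned setting with p* = x*(x,π,ℓ,u,v),
it holds that {ℓ,…,g} ⊊ M ⊆ {ℓ,…,s−1}. -/
theorem stmt_12 (N : ℕ) (x : ℕ → ℝ) (hx : ∀ j, 0 ≤ x j)
    (π : Equiv.Perm ℕ) (ℓ u g s : ℕ) (hl : 1 ≤ ℓ) (hlu : ℓ ≤ u) (huN : u ≤ N)
    (v : ℝ) (hv0 : 0 < v) (hv : v ≤ ∑ j ∈ Finset.Icc ℓ u, x (π j))
    (pstar : ℝ) (hp0 : 0 < pstar)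
    (hg1 : ℓ ≤ g + 1) (hgs : g < s) (hs1 : s ≤ u + 1)
    (hpart1 : ∀ j, ℓ ≤ j → j ≤ g → pstar < x (π j))
    (hpart2 : ∀ j, g < j → j < s → x (π j) = pstar)
    (hpart3 : ∀ j, s ≤ j → j ≤ u → x (π j) < pstar)
    (M : Finset ℕ) (hMsub : M ⊆ Finset.Icc ℓ u) (hne : M.Nonempty)
    (ha : ∀ j ∈ M, ∀ k ∈ Finset.Icc ℓ u \ M, x (π k) ≤ x (π j))
    (hb : v ≤ ∑ j ∈ M, x (π j))
    (hc : ∀ k ∈ M, ∑ j ∈ M.erase k, x (π j) < v)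
    (hmin : M.inf' hne (fun j => x (π j)) = pstar) :
    Finset.Icc ℓ g ⊂ M ∧ M ⊆ Finset.Icc ℓ (s - 1) := by
  obtain ⟨k0, hk0M, hk0⟩ := Finset.exists_mem_eq_inf' hne (fun j => x (π j))
  have hk0p : x (π k0) = pstar := by rw [← hmin, hk0]
  have hMs : M ⊆ Finset.Icc ℓ (s - 1) := by
    intro j hj
    have hj' := hMsub hj
    rw [Finset.mem_Icc] at hj' ⊢
    refine ⟨hj'.1, ?_⟩
    by_contra h
    push_neg at h
    have hs : s ≤ j := by omega
    have h1 := hpart3 j hs hj'.2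
    have hge : pstar ≤ x (π j) := by
      rw [← hmin]; exact Finset.inf'_le _ hj
    linarith
  have hsub : Finset.Icc ℓ g ⊆ M := by
    intro j hj
    rw [Finset.mem_Icc] at hj
    by_contra hjM
    have hjIcc : j ∈ Finset.Icc ℓ u \ M :=
      Finset.mem_sdiff.mpr ⟨Finset.mem_Icc.mpr ⟨hj.1, by omega⟩, hjM⟩
    have h1 := ha k0 hk0M j hjIcc
    have h2 := hpart1 j hj.1 hj.2
    linarith [hk0p]
  refine ⟨⟨hsub, ?_⟩, hMs⟩
  intro hMg
  have h3 := hMg hk0M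
  rw [Finset.mem_Icc] at h3
  have := hpart1 k0 h3.1 h3.2
  linarith
end

section
/- Binning with geometric thresholds yields quasi-minimal Dörfler marking: for 0 < ν < 1, the set M produced by ordering elements by bins B_k = {j : ν^{k+1} < x_j/M_max ≤ ν^k} (for k = 0,…,K, with K minimal such that ν^{K+1}·M_max ≤ ((1−θ)/θ)·v/N, and B_{K+1} the remainder) and greedily taking elements bin-by-bin until ∑_{i≤n} x_{π(i)} ≥ v := θ·∑_j x_j, satisfies the Dörfler criterion with #M ≤ ⌈ν^{-1}·N_min⌉. -/
/-- Binning with geometric thresholds yields quasi-minimal Dörfler marking: the set M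
produced by ordering elements bin-by-bin (bins B_k = {j : ν^{k+1}·M_max < x_j ≤ ν^k·M_max}
for k ≤ K, K minimal with ν^{K+1}·M_max ≤ ((1−θ)/θ)·v/N, and remainder bin B_{K+1}) and
greedily taking elements until the partial sum reaches v := θ·∑ x_j, satisfies the
Dörfler criterion with #M ≤ ⌈ν⁻¹·N_min⌉. -/
theorem stmt_13 (N : ℕ) (hN : 1 ≤ N) (θ ν : ℝ) (hθ0 : 0 < θ) (hθ1 : θ < 1)
    (hν0 : 0 < ν) (hν1 : ν < 1) (x : ℕ → ℝ)
    (hx : ∀ j ∈ Finset.Icc 1 N, 0 ≤ x j)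
    (hx0 : ∃ j ∈ Finset.Icc 1 N, x j ≠ 0)
    (Mmax : ℝ) (hMb : ∀ j ∈ Finset.Icc 1 N, x j ≤ Mmax)
    (hMa : ∃ j ∈ Finset.Icc 1 N, x j = Mmax)
    (K : ℕ)
    (hK : ν ^ (K + 1) * Mmax
      ≤ (1 - θ) / θ * ((θ * ∑ j ∈ Finset.Icc 1 N, x j) / N))
    (hKmin : ∀ K' : ℕ, K' < K →
      ¬(ν ^ (K' + 1) * Mmax
        ≤ (1 - θ) / θ * ((θ * ∑ j ∈ Finset.Icc 1 N, x j) / N)))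
    (b : ℕ → ℕ) (hbK : ∀ j ∈ Finset.Icc 1 N, b j ≤ K + 1)
    (hbin : ∀ j ∈ Finset.Icc 1 N, ∀ k : ℕ, k ≤ K →
      (b j = k ↔ (ν ^ (k + 1) * Mmax < x j ∧ x j ≤ ν ^ k * Mmax)))
    (π : Equiv.Perm ℕ) (hπ : ∀ j ∈ Finset.Icc 1 N, π j ∈ Finset.Icc 1 N)
    (hπord : ∀ i ∈ Finset.Icc 1 N, ∀ j ∈ Finset.Icc 1 N, b (π i) < b (π j) → i < j)
    (n : ℕ)
    (hn : θ * ∑ j ∈ Finset.Icc 1 N, x j ≤ ∑ i ∈ Finset.Icc 1 n, x (π i))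
    (hnmin : ∀ m, m < n →
      ¬(θ * ∑ j ∈ Finset.Icc 1 N, x j ≤ ∑ i ∈ Finset.Icc 1 m, x (π i))) :
    (θ * ∑ j ∈ Finset.Icc 1 N, x j ≤ ∑ j ∈ (Finset.Icc 1 n).image ⇑π, x j) ∧
    ((((Finset.Icc 1 n).image ⇑π).card : ℤ)
      ≤ ⌈ν⁻¹ * ((sInf {m : ℕ | ∃ M' ⊆ Finset.Icc 1 N,
          (θ * ∑ j ∈ Finset.Icc 1 N, x j ≤ ∑ j ∈ M', x j) ∧ M'.card = m} : ℕ) : ℝ)⌉) := by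
  classical
  set I := Finset.Icc 1 N with hIdef
  set S := ∑ j ∈ I, x j with hSdef
  obtain ⟨j0, hj0I, hj0⟩ := hx0
  have hxj0 : 0 < x j0 := lt_of_le_of_ne (hx j0 hj0I) (Ne.symm hj0)
  have hS0 : 0 < S :=
    lt_of_lt_of_le hxj0 (Finset.single_le_sum (fun j hj => hx j hj) hj0I)
  have hv0 : 0 < θ * S := mul_pos hθ0 hS0
  have hM0 : 0 < Mmax := lt_of_lt_of_le hxj0 (hMb j0 hj0I)
  have hinj : Function.Injective (⇑π) := π.injective
  have himg : I.image ⇑π = I := by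
    apply Finset.eq_of_subset_of_card_le
    · intro j hj
      obtain ⟨i, hi, rfl⟩ := Finset.mem_image.mp hj
      exact hπ i hi
    · rw [Finset.card_image_of_injective _ hinj]
  have hinv : ∀ j ∈ I, π.symm j ∈ I := by
    intro j hj
    rw [← himg] at hj
    obtain ⟨i, hi, rfl⟩ := Finset.mem_image.mp hj
    simpa using hi
  -- upper bound from bins
  have hupper : ∀ j ∈ I, ∀ k : ℕ, k ≤ K + 1 → k ≤ b j → x j ≤ ν ^ k * Mmax := by
    intro j hj k
    induction k with
    | zero => intro _ _; simpa using hMb j hj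
    | succ k ih =>
      intro hk1 hkb
      have h1 : x j ≤ ν ^ k * Mmax := ih (by omega) (by omega)
      have h3 : b j ≠ k := by omega
      by_contra h5
      push_neg at h5
      exact h3 ((hbin j hj k (by omega)).mpr ⟨h5, h1⟩)
  -- the bins up to K already satisfy the Dörfler criterion
  have hcardI : I.card = N := by rw [hIdef, Nat.card_Icc]; omega
  have hθS : θ * S ≤ ∑ j ∈ I.filter (fun j => b j ≤ K), x j := by
    have hcardR : (I.filter (fun j => ¬ b j ≤ K)).card ≤ N := by
      calc (I.filter (fun j => ¬ b j ≤ K)).card ≤ I.card := Finset.card_filter_le _ _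
        _ = N := hcardI
    have hpowpos : (0:ℝ) ≤ ν ^ (K + 1) * Mmax := by positivity
    have hRbound : ∑ j ∈ I.filter (fun j => ¬ b j ≤ K), x j ≤ (1 - θ) * S := by
      have h1 : ∀ j ∈ I.filter (fun j => ¬ b j ≤ K), x j ≤ ν ^ (K + 1) * Mmax := by
        intro j hj
        obtain ⟨hjI, hjb⟩ := Finset.mem_filter.mp hj
        have := hbK j hjI
        exact hupper j hjI (K + 1) le_rfl (by omega)
      have hNpos : (0:ℝ) < (N:ℝ) := by exact_mod_cast hN
      calc ∑ j ∈ I.filter (fun j => ¬ b j ≤ K), x j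
          ≤ (I.filter (fun j => ¬ b j ≤ K)).card • (ν ^ (K + 1) * Mmax) :=
            Finset.sum_le_card_nsmul _ _ _ h1
        _ = ((I.filter (fun j => ¬ b j ≤ K)).card : ℝ) * (ν ^ (K + 1) * Mmax) := by
            rw [nsmul_eq_mul]
        _ ≤ (N : ℝ) * (ν ^ (K + 1) * Mmax) := by
            apply mul_le_mul_of_nonneg_right _ hpowpos
            exact_mod_cast hcardR
        _ ≤ (N : ℝ) * ((1 - θ) / θ * ((θ * S) / N)) := by
            apply mul_le_mul_of_nonneg_left hK hNpos.le
        _ = (1 - θ) * S := by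
            field_simp
    have hsplit := Finset.sum_filter_add_sum_filter_not I (fun j => b j ≤ K) x
    linarith
  have hn1 : 1 ≤ n := by
    by_contra h
    have hzero : n = 0 := by omega
    subst hzero
    rw [show Finset.Icc 1 0 = (∅ : Finset ℕ) from by simp, Finset.sum_empty] at hn
    linarith
  have hsumI : ∑ i ∈ I, x (π i) = S := by
    rw [hSdef]
    conv_rhs => rw [← himg]
    rw [Finset.sum_image (fun a _ c _ h => hinj h)]
  have hnN : n ≤ N := by
    by_contra h
    push_neg at h
    refine hnmin N h ?_
    rw [← hIdef, hsumI]
    nlinarith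
  -- every marked element lies in a bin of index ≤ K
  have hbn : ∀ i ∈ Finset.Icc 1 n, b (π i) ≤ K := by
    by_contra h
    push_neg at h
    obtain ⟨i, hi, hib⟩ := h
    have hi1 := (Finset.mem_Icc.mp hi).1
    have hi2 := (Finset.mem_Icc.mp hi).2
    have hiI : i ∈ I := Finset.mem_Icc.mpr ⟨hi1, le_trans hi2 hnN⟩
    have hsub : I.filter (fun j => b j ≤ K) ⊆ (Finset.Icc 1 (i - 1)).image ⇑π := by
      intro j hj
      obtain ⟨hjI, hjb⟩ := Finset.mem_filter.mp hj
      have hsI := hinv j hjI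
      have hlt : π.symm j < i := by
        apply hπord _ hsI _ hiI
        rw [Equiv.apply_symm_apply]
        omega
      refine Finset.mem_image.mpr ⟨π.symm j, ?_, by simp⟩
      have := (Finset.mem_Icc.mp hsI).1
      exact Finset.mem_Icc.mpr ⟨this, by omega⟩
    have hle : ∑ j ∈ I.filter (fun j => b j ≤ K), x j
        ≤ ∑ i ∈ Finset.Icc 1 (i - 1), x (π i) := by
      have heq : ∑ j ∈ (Finset.Icc 1 (i - 1)).image ⇑π, x j
          = ∑ a ∈ Finset.Icc 1 (i - 1), x (π a) :=
        Finset.sum_image (fun a _ c _ h => hinj h)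
      rw [← heq]
      apply Finset.sum_le_sum_of_subset_of_nonneg hsub
      intro j hj _
      obtain ⟨a, ha, rfl⟩ := Finset.mem_image.mp hj
      have ha1 := (Finset.mem_Icc.mp ha).1
      have ha2 := (Finset.mem_Icc.mp ha).2
      exact hx _ (hπ a (Finset.mem_Icc.mpr ⟨ha1, by omega⟩))
    exact hnmin (i - 1) (by omega) (le_trans hθS hle)
  have hnI : n ∈ I := Finset.mem_Icc.mpr ⟨hn1, hnN⟩
  set k := b (π n) with hkdef
  have hkK : k ≤ K := hbn n (Finset.mem_Icc.mpr ⟨hn1, le_rfl⟩)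
  -- marked elements are large
  have hmarked : ∀ i ∈ Finset.Icc 1 n, ν ^ (k + 1) * Mmax < x (π i) := by
    intro i hi
    have hi1 := (Finset.mem_Icc.mp hi).1
    have hi2 := (Finset.mem_Icc.mp hi).2
    have hiI : i ∈ I := Finset.mem_Icc.mpr ⟨hi1, le_trans hi2 hnN⟩
    have hbi : b (π i) ≤ k := by
      by_contra hc
      push_neg at hc
      have := hπord n hnI i hiI hc
      omega
    have hlow := ((hbin (π i) (hπ i hiI) (b (π i)) (le_trans hbi hkK)).mp rfl).1
    have hpow : ν ^ (k + 1) ≤ ν ^ (b (π i) + 1) :=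
      pow_le_pow_of_le_one hν0.le hν1.le (by omega)
    calc ν ^ (k + 1) * Mmax ≤ ν ^ (b (π i) + 1) * Mmax :=
          mul_le_mul_of_nonneg_right hpow hM0.le
      _ < x (π i) := hlow
  -- elements outside the first n-1 picks are small
  have houtside : ∀ j ∈ I, j ∉ (Finset.Icc 1 (n - 1)).image ⇑π →
      x j ≤ ν ^ k * Mmax := by
    intro j hjI hjn
    have hsI := hinv j hjI
    have hs1 := (Finset.mem_Icc.mp hsI).1
    have hge : n ≤ π.symm j := by
      by_contra hc
      push_neg at hc
      exact hjn (Finset.mem_image.mpr ⟨π.symm j,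
        Finset.mem_Icc.mpr ⟨hs1, by omega⟩, by simp⟩)
    have hbj : k ≤ b j := by
      by_contra hc
      push_neg at hc
      have : π.symm j < n := by
        apply hπord _ hsI _ hnI
        rwa [Equiv.apply_symm_apply]
      omega
    have h1 : x j ≤ ν ^ (b j) * Mmax := hupper j hjI (b j) (hbK j hjI) le_rfl
    have hpow : ν ^ (b j) ≤ ν ^ k := pow_le_pow_of_le_one hν0.le hν1.le hbj
    exact le_trans h1 (mul_le_mul_of_nonneg_right hpow hM0.le)
  -- the optimal set
  set mset : Set ℕ := {m : ℕ | ∃ M' ⊆ I, (θ * S ≤ ∑ j ∈ M', x j) ∧ M'.card = m}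
    with hmsetdef
  have hne : mset.Nonempty := ⟨I.card, I, Finset.Subset.refl I, by nlinarith, rfl⟩
  have hmem := Nat.sInf_mem hne
  rw [hmsetdef, Set.mem_setOf_eq] at hmem
  obtain ⟨Mm, hMmsub, hMmd, hMmcard⟩ := hmem
  constructor
  · rw [Finset.sum_image (fun a _ c _ h => hinj h)]
    exact hn
  · have hcard : ((Finset.Icc 1 n).image ⇑π).card = n := by
      rw [Finset.card_image_of_injective _ hinj, Nat.card_Icc]; omega
    rw [hcard]
    set m := sInf mset with hmdef
    set Mm2 := (Finset.Icc 1 (n - 1)).image ⇑π with hMm2def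
    have hs1 : ∑ j ∈ Mm2, x j < θ * S := by
      rw [hMm2def, Finset.sum_image (fun a _ c _ h => hinj h)]
      have := hnmin (n - 1) (by omega)
      push_neg at this
      exact this
    set c1 := (Mm2 \ Mm).card with hc1def
    set c2 := (Mm \ Mm2).card with hc2def
    set a := (Mm2 ∩ Mm).card with hadef
    have hlb : (c1 : ℝ) * (ν ^ (k + 1) * Mmax) ≤ ∑ j ∈ Mm2 \ Mm, x j := by
      have hh : ∀ j ∈ Mm2 \ Mm, ν ^ (k + 1) * Mmax ≤ x j := by
        intro j hj
        have hjM := (Finset.mem_sdiff.mp hj).1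
        rw [hMm2def] at hjM
        obtain ⟨aa, haa, rfl⟩ := Finset.mem_image.mp hjM
        have haa1 := (Finset.mem_Icc.mp haa).1
        have haa2 := (Finset.mem_Icc.mp haa).2
        exact (hmarked aa (Finset.mem_Icc.mpr ⟨haa1, by omega⟩)).le
      have := Finset.card_nsmul_le_sum (Mm2 \ Mm) x (ν ^ (k + 1) * Mmax) hh
      rwa [nsmul_eq_mul] at this
    have hub : ∑ j ∈ Mm \ Mm2, x j ≤ (c2 : ℝ) * (ν ^ k * Mmax) := by
      have hh : ∀ j ∈ Mm \ Mm2, x j ≤ ν ^ k * Mmax := by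
        intro j hj
        have h1 := (Finset.mem_sdiff.mp hj).1
        have h2 := (Finset.mem_sdiff.mp hj).2
        rw [hMm2def] at h2
        exact houtside j (hMmsub h1) h2
      have := Finset.sum_le_card_nsmul (Mm \ Mm2) x (ν ^ k * Mmax) hh
      rwa [nsmul_eq_mul] at this
    have hsplit1 : ∑ j ∈ Mm2 ∩ Mm, x j + ∑ j ∈ Mm2 \ Mm, x j = ∑ j ∈ Mm2, x j :=
      Finset.sum_inter_add_sum_sdiff _ _ _
    have hsplit2 : ∑ j ∈ Mm ∩ Mm2, x j + ∑ j ∈ Mm \ Mm2, x j = ∑ j ∈ Mm, x j :=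
      Finset.sum_inter_add_sum_sdiff _ _ _
    have hcomm : Mm ∩ Mm2 = Mm2 ∩ Mm := Finset.inter_comm _ _
    rw [hcomm] at hsplit2
    have hkey : (c1 : ℝ) * (ν ^ (k + 1) * Mmax) < (c2 : ℝ) * (ν ^ k * Mmax) := by
      linarith
    have hB : (0:ℝ) < ν ^ k * Mmax := by positivity
    have h5 : (c1 : ℝ) * ν < (c2 : ℝ) := by
      have h6 : ((c1 : ℝ) * ν) * (ν ^ k * Mmax) < (c2 : ℝ) * (ν ^ k * Mmax) := by
        calc ((c1 : ℝ) * ν) * (ν ^ k * Mmax) = (c1 : ℝ) * (ν ^ (k + 1) * Mmax) := by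
              rw [pow_succ]; ring
          _ < (c2 : ℝ) * (ν ^ k * Mmax) := hkey
      exact lt_of_mul_lt_mul_right h6 hB.le
    have hcMm2 : Mm2.card = n - 1 := by
      rw [hMm2def, Finset.card_image_of_injective _ hinj, Nat.card_Icc]; omega
    have hc1a : c1 + a + 1 = n := by
      have := Finset.card_sdiff_add_card_inter Mm2 Mm
      rw [hcMm2] at this
      omega
    have hc2a : a + c2 = m := by
      have := Finset.card_inter_add_card_sdiff Mm Mm2
      rw [hcomm] at this
      omega
    have e1 : (c1 : ℝ) + (a : ℝ) + 1 = (n : ℝ) := by exact_mod_cast hc1a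
    have e2 : (a : ℝ) + (c2 : ℝ) = (m : ℝ) := by exact_mod_cast hc2a
    have h10 : ν * (a : ℝ) ≤ (a : ℝ) := mul_le_of_le_one_left (Nat.cast_nonneg _) hν1.le
    have h7 : ν * ((n : ℝ) - 1) < (m : ℝ) := by
      have h9 : ν * ((n : ℝ) - 1) = (c1 : ℝ) * ν + ν * (a : ℝ) := by
        rw [← e1]; ring
      linarith
    have hfin : ((n : ℝ)) - 1 < ν⁻¹ * (m : ℝ) := by
      rw [inv_mul_eq_div, lt_div_iff₀ hν0]
      nlinarith
    have hlt : ((n : ℤ) - 1) < ⌈ν⁻¹ * (m : ℝ)⌉ := by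
      rw [Int.lt_ceil]
      push_cast
      linarith
    omega
end

section
/- In the binning algorithm, the union of all bins B_0 ∪ … ∪ B_K (i.e., {1,…,N}∖B_{K+1}) satisfies the Dörfler criterion: θ·∑_{j=1}^N x_j ≤ ∑_{j∉B_{K+1}} x_j. -/
/-- In the binning algorithm, the union of all bins B_0 ∪ … ∪ B_K, i.e., the complement
of B_{K+1} = {j : x_j ≤ ν^{K+1}·M_max}, satisfies the Dörfler criterion. -/
theorem stmt_14 (N : ℕ) (hN : 1 ≤ N) (θ ν : ℝ) (hθ0 : 0 < θ) (hθ1 : θ < 1)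
    (hν0 : 0 < ν) (hν1 : ν < 1) (x : ℕ → ℝ)
    (hx : ∀ j ∈ Finset.Icc 1 N, 0 ≤ x j)
    (hx0 : ∃ j ∈ Finset.Icc 1 N, x j ≠ 0)
    (Mmax : ℝ) (hMb : ∀ j ∈ Finset.Icc 1 N, x j ≤ Mmax)
    (K : ℕ)
    (hK : ν ^ (K + 1) * Mmax
      ≤ (1 - θ) / θ * ((θ * ∑ j ∈ Finset.Icc 1 N, x j) / N)) :
    θ * ∑ j ∈ Finset.Icc 1 N, x j
      ≤ ∑ j ∈ Finset.Icc 1 N \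
          (Finset.Icc 1 N).filter (fun j => x j ≤ ν ^ (K + 1) * Mmax), x j := by
  set S := ∑ j ∈ Finset.Icc 1 N, x j with hS
  set B := (Finset.Icc 1 N).filter (fun j => x j ≤ ν ^ (K + 1) * Mmax) with hB
  have hNpos : (0:ℝ) < N := by exact_mod_cast Nat.lt_of_lt_of_le Nat.zero_lt_one hN
  have hbound : (1 - θ) / θ * ((θ * S) / N) = (1 - θ) * S / N := by
    field_simp
  have hsub : B ⊆ Finset.Icc 1 N := Finset.filter_subset _ _
  have hsumB : ∑ j ∈ B, x j ≤ (1 - θ) * S := by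
    calc ∑ j ∈ B, x j ≤ ∑ _j ∈ B, (1 - θ) * S / N := by
          refine Finset.sum_le_sum fun j hj => ?_
          have := (Finset.mem_filter.mp hj).2
          calc x j ≤ ν ^ (K + 1) * Mmax := this
            _ ≤ (1 - θ) * S / N := by rw [← hbound]; exact hK
      _ = B.card * ((1 - θ) * S / N) := by rw [Finset.sum_const, nsmul_eq_mul]
      _ ≤ N * ((1 - θ) * S / N) := by
          have hcard : (B.card : ℝ) ≤ N := by
            have := Finset.card_le_card hsub
            have hc : (Finset.Icc 1 N).card = N := by simp
            exact_mod_cast hc ▸ this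
          have hSnn : 0 ≤ S := Finset.sum_nonneg hx
          have hq : 0 ≤ (1 - θ) * S / N := div_nonneg (mul_nonneg (by linarith) hSnn) hNpos.le
          exact mul_le_mul_of_nonneg_right hcard hq
      _ = (1 - θ) * S := by field_simp
  have hsplit : ∑ j ∈ Finset.Icc 1 N \ B, x j = S - ∑ j ∈ B, x j := by
    rw [hS, ← Finset.sum_sdiff hsub]; ring
  rw [hsplit]
  linarith
end

section
/- Counting bound within a bin: if all values x_j for j in a finite set R ∪ S lie in the half-open interval (ν^{k+1}·M_max, ν^k·M_max], and there is an element r₀ ∈ R with ∑_{j∈R∖{r₀}} x_j < ∑_{j∈S} x_j, then #R ≤ ⌈ν^{-1}·#S⌉. -/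
/-- Counting bound within a bin: if all values x_j for j ∈ R ∪ S lie in
(ν^{k+1}·M_max, ν^k·M_max], and some r₀ ∈ R satisfies ∑_{R∖{r₀}} x_j < ∑_S x_j,
then #R ≤ ⌈ν⁻¹·#S⌉. -/
theorem stmt_15 (ν Mmax : ℝ) (hν0 : 0 < ν) (hν1 : ν < 1) (hM : 0 < Mmax) (k : ℕ)
    (x : ℕ → ℝ) (R S : Finset ℕ)
    (hbound : ∀ j ∈ R ∪ S, ν ^ (k + 1) * Mmax < x j ∧ x j ≤ ν ^ k * Mmax)
    (r₀ : ℕ) (hr : r₀ ∈ R)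
    (hlt : ∑ j ∈ R.erase r₀, x j < ∑ j ∈ S, x j) :
    (R.card : ℤ) ≤ ⌈ν⁻¹ * (S.card : ℝ)⌉ := by
  have hlow : ((R.erase r₀).card : ℝ) * (ν ^ (k + 1) * Mmax) ≤ ∑ j ∈ R.erase r₀, x j := by
    rw [← nsmul_eq_mul]
    exact Finset.card_nsmul_le_sum _ _ _ fun j hj =>
      ((hbound j (Finset.mem_union_left _ (Finset.mem_of_mem_erase hj))).1).le
  have hhigh : ∑ j ∈ S, x j ≤ (S.card : ℝ) * (ν ^ k * Mmax) := by
    rw [← nsmul_eq_mul]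
    exact Finset.sum_le_card_nsmul _ _ _ fun j hj =>
      (hbound j (Finset.mem_union_right _ hj)).2
  have hcard : ((R.erase r₀).card : ℝ) = (R.card : ℝ) - 1 := by
    rw [Finset.card_erase_of_mem hr]
    have : 1 ≤ R.card := Finset.card_pos.mpr ⟨r₀, hr⟩
    push_cast [this]
    ring
  have hkey : ((R.card : ℝ) - 1) * (ν ^ (k + 1) * Mmax) < (S.card : ℝ) * (ν ^ k * Mmax) := by
    rw [← hcard]; exact lt_of_le_of_lt hlow (lt_of_lt_of_le hlt hhigh)
  have hpos : (0:ℝ) < ν ^ (k + 1) * Mmax := by positivity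
  have h2 : (R.card : ℝ) - 1 < ν⁻¹ * (S.card : ℝ) := by
    have heq : ν⁻¹ * (S.card : ℝ) * (ν ^ (k + 1) * Mmax) = (S.card : ℝ) * (ν ^ k * Mmax) := by
      field_simp; ring
    rw [← heq] at hkey
    exact lt_of_mul_lt_mul_right hkey hpos.le
  have h3 : ((R.card : ℤ) - 1 : ℝ) < ν⁻¹ * (S.card : ℝ) := by push_cast; linarith
  have h4 : ((R.card : ℤ) - 1) < ⌈ν⁻¹ * (S.card : ℝ)⌉ := Int.lt_ceil.mpr (by exact_mod_cast h3)
  omega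
end

section
/- The QuickMark recursion preserves admissibility: given admissible inputs (π_old, ℓ, u, v) and the partitioned permutation π_new with indices g, s and pivot value p*, if σ_g := ∑_{j=ℓ}^g x_{π_new(j)} ≥ v, then (π_new, ℓ, g, v) is admissible; if instead σ_g + (s−g−1)·p* < v, then (π_new, s, u, v − ∑_{j=ℓ}^{s−1} x_{π_new(j)}) is admissible. -/
/-- Admissibility of a QuickMark call (x, π, ℓ, u, v): partial ordering of x∘π outside
{ℓ,…,u} and the goal-value identity 0 < v = θ·∑ x_j − ∑_{j<ℓ} x_{π(j)} ≤ ∑_{j=ℓ}^u x_{π(j)}. -/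
def QuickMarkAdmissible (N : ℕ) (θ : ℝ) (x : ℕ → ℝ) (π : Equiv.Perm ℕ)
    (ℓ u : ℕ) (v : ℝ) : Prop :=
  (∀ j k : ℕ, 1 ≤ j → j < ℓ → ℓ ≤ k → k ≤ N → x (π k) < x (π j)) ∧
  (∀ j k : ℕ, 1 ≤ j → j ≤ u → u < k → k ≤ N → x (π k) < x (π j)) ∧
  0 < v ∧
  v = θ * ∑ j ∈ Finset.Icc 1 N, x j - ∑ j ∈ Finset.Icc 1 (ℓ - 1), x (π j) ∧
  v ≤ ∑ j ∈ Finset.Icc ℓ u, x (π j)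

/-- The QuickMark recursion preserves admissibility: if (π_old, ℓ, u, v) is admissible and
π_new is the partitioned permutation with indices g, s and pivot value p*, then
σ_g ≥ v implies (π_new, ℓ, g, v) admissible, and σ_g + (s−g−1)·p* < v implies
(π_new, s, u, v − ∑_{j=ℓ}^{s−1} x_{π_new(j)}) admissible. -/
theorem stmt_16 (N : ℕ) (θ : ℝ) (hθ0 : 0 < θ) (hθ1 : θ < 1) (x : ℕ → ℝ)
    (hx : ∀ j, 0 ≤ x j)
    (πo πn : Equiv.Perm ℕ) (ℓ u g s p : ℕ) (v : ℝ) (pstar : ℝ)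
    (hl : 1 ≤ ℓ) (hlu : ℓ ≤ u) (huN : u ≤ N)
    (hadm : QuickMarkAdmissible N θ x πo ℓ u v)
    (hagree : ∀ j, j ∉ Finset.Icc ℓ u → πn j = πo j)
    (himg : (Finset.Icc ℓ u).image ⇑πn = (Finset.Icc ℓ u).image ⇑πo)
    (hg1 : ℓ ≤ g + 1) (hgs : g < s) (hs1 : s ≤ u + 1)
    (hp : p ∈ Finset.Icc ℓ u) (hpdef : pstar = x (πo p)) (hp0 : 0 < pstar)
    (hpart1 : ∀ j, ℓ ≤ j → j ≤ g → pstar < x (πn j))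
    (hpart2 : ∀ j, g < j → j < s → x (πn j) = pstar)
    (hpart3 : ∀ j, s ≤ j → j ≤ u → x (πn j) < pstar) :
    ((v ≤ ∑ j ∈ Finset.Icc ℓ g, x (πn j)) →
      QuickMarkAdmissible N θ x πn ℓ g v) ∧
    ((∑ j ∈ Finset.Icc ℓ g, x (πn j) + ((s - g - 1 : ℕ) : ℝ) * pstar < v) →
      QuickMarkAdmissible N θ x πn s u
        (v - ∑ j ∈ Finset.Icc ℓ (s - 1), x (πn j))) := by
  obtain ⟨hA, hB, hv0, hvid, hvle⟩ := hadm
  obtain ⟨hpl, hpu⟩ := Finset.mem_Icc.mp hp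
  have hagree' : ∀ j, j < ℓ ∨ u < j → x (πn j) = x (πo j) := by
    intro j hj
    rw [hagree j (by simp only [Finset.mem_Icc, not_and, not_le]; omega)]
  have himmem : ∀ k, ℓ ≤ k → k ≤ u → ∃ k', (ℓ ≤ k' ∧ k' ≤ u) ∧ πn k = πo k' := by
    intro k hk1 hk2
    have hm : πn k ∈ (Finset.Icc ℓ u).image ⇑πo := by
      rw [← himg]; exact Finset.mem_image_of_mem _ (Finset.mem_Icc.mpr ⟨hk1, hk2⟩)
    obtain ⟨k', hk', he⟩ := Finset.mem_image.mp hm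
    exact ⟨k', ⟨(Finset.mem_Icc.mp hk').1, (Finset.mem_Icc.mp hk').2⟩, he.symm⟩
  have hpre : ∑ j ∈ Finset.Icc 1 (ℓ - 1), x (πn j) = ∑ j ∈ Finset.Icc 1 (ℓ - 1), x (πo j) := by
    refine Finset.sum_congr rfl fun j hj => ?_
    exact hagree' j (Or.inl (by have := (Finset.mem_Icc.mp hj).2; omega))
  have hblk : ∑ j ∈ Finset.Icc ℓ u, x (πn j) = ∑ j ∈ Finset.Icc ℓ u, x (πo j) := by
    have h1 : ∑ j ∈ Finset.Icc ℓ u, x (πn j) = ∑ i ∈ (Finset.Icc ℓ u).image ⇑πn, x i :=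
      (Finset.sum_image fun a _ b _ h => πn.injective h).symm
    have h2 : ∑ j ∈ Finset.Icc ℓ u, x (πo j) = ∑ i ∈ (Finset.Icc ℓ u).image ⇑πo, x i :=
      (Finset.sum_image fun a _ b _ h => πo.injective h).symm
    rw [h1, h2, himg]
  have hls : ℓ ≤ s := by omega
  have hgu : g ≤ u := by omega
  -- sums rewritten as Ioc
  have hIcc : ∀ a b : ℕ, 1 ≤ a → Finset.Icc a b = Finset.Ioc (a - 1) b := by
    intro a b ha
    ext k
    simp only [Finset.mem_Icc, Finset.mem_Ioc]
    omega
  constructor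
  · -- first branch
    intro hσ
    refine ⟨?_, ?_, hv0, ?_, hσ⟩
    · intro j k hj1 hjl hk1 hkN
      rw [hagree' j (Or.inl hjl)]
      by_cases hku : k ≤ u
      · obtain ⟨k', ⟨hk'1, hk'2⟩, he⟩ := himmem k hk1 hku
        rw [he]
        exact hA j k' hj1 hjl hk'1 (by omega)
      · rw [hagree' k (Or.inr (by omega))]
        exact hA j k hj1 hjl hk1 hkN
    · intro j k hj1 hjg hgk hkN
      by_cases hjl : j < ℓ
      · rw [hagree' j (Or.inl hjl)]
        by_cases hku : k ≤ u
        · obtain ⟨k', ⟨hk'1, hk'2⟩, he⟩ := himmem k (by omega) hku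
          rw [he]
          exact hA j k' hj1 hjl hk'1 (by omega)
        · rw [hagree' k (Or.inr (by omega))]
          exact hA j k hj1 hjl (by omega) hkN
      · have hjv := hpart1 j (by omega) hjg
        have hkle : x (πn k) ≤ pstar := by
          by_cases hku : k ≤ u
          · by_cases hks : k < s
            · exact le_of_eq (hpart2 k hgk hks)
            · exact le_of_lt (hpart3 k (by omega) hku)
          · rw [hagree' k (Or.inr (by omega)), hpdef]
            exact le_of_lt (hB p k (by omega) hpu (by omega) hkN)
        linarith
    · rw [hvid, hpre]
  · -- second branch
    intro hσ
    have hs1' : 1 ≤ s := by omega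
    -- middle sum is constant pstar
    have hmid : ∑ j ∈ Finset.Ioc g (s - 1), x (πn j) = ((s - g - 1 : ℕ) : ℝ) * pstar := by
      have hc : ∑ j ∈ Finset.Ioc g (s - 1), x (πn j)
          = ∑ _j ∈ Finset.Ioc g (s - 1), pstar := by
        refine Finset.sum_congr rfl fun j hj => ?_
        obtain ⟨h1, h2⟩ := Finset.mem_Ioc.mp hj
        exact hpart2 j h1 (by omega)
      rw [hc, Finset.sum_const, Nat.card_Ioc, nsmul_eq_mul]
      congr 1
      norm_cast
      omega
    have hsplit1 : ∑ j ∈ Finset.Icc ℓ g, x (πn j) + ∑ j ∈ Finset.Ioc g (s - 1), x (πn j)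
        = ∑ j ∈ Finset.Icc ℓ (s - 1), x (πn j) := by
      rw [hIcc ℓ g hl, hIcc ℓ (s - 1) hl]
      exact Finset.sum_Ioc_consecutive _ (by omega) (by omega)
    have hsum_ls : ∑ j ∈ Finset.Icc ℓ (s - 1), x (πn j)
        = ∑ j ∈ Finset.Icc ℓ g, x (πn j) + ((s - g - 1 : ℕ) : ℝ) * pstar := by
      rw [← hsplit1, hmid]
    refine ⟨?_, ?_, ?_, ?_, ?_⟩
    · intro j k hj1 hjs hk1 hkN
      by_cases hjl : j < ℓ
      · rw [hagree' j (Or.inl hjl)]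
        by_cases hku : k ≤ u
        · obtain ⟨k', ⟨hk'1, hk'2⟩, he⟩ := himmem k (by omega) hku
          rw [he]
          exact hA j k' hj1 hjl hk'1 (by omega)
        · rw [hagree' k (Or.inr (by omega))]
          exact hA j k hj1 hjl (by omega) hkN
      · have hjv : pstar ≤ x (πn j) := by
          by_cases hjg : j ≤ g
          · exact le_of_lt (hpart1 j (by omega) hjg)
          · exact le_of_eq (hpart2 j (by omega) hjs).symm
        have hkv : x (πn k) < pstar := by
          by_cases hku : k ≤ u
          · exact hpart3 k hk1 hku
          · rw [hagree' k (Or.inr (by omega)), hpdef]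
            exact hB p k (by omega) hpu (by omega) hkN
        linarith
    · intro j k hj1 hju huk hkN
      rw [hagree' k (Or.inr huk)]
      by_cases hjl : j < ℓ
      · rw [hagree' j (Or.inl hjl)]
        exact hB j k hj1 hju huk hkN
      · obtain ⟨j', ⟨hj'1, hj'2⟩, he⟩ := himmem j (by omega) hju
        rw [he]
        exact hB j' k (by omega) hj'2 huk hkN
    · rw [hsum_ls]; linarith
    · rw [hvid]
      have hsplit2 : ∑ j ∈ Finset.Icc 1 (ℓ - 1), x (πn j) + ∑ j ∈ Finset.Icc ℓ (s - 1), x (πn j)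
          = ∑ j ∈ Finset.Icc 1 (s - 1), x (πn j) := by
        rw [hIcc 1 (ℓ - 1) le_rfl, hIcc ℓ (s - 1) hl, hIcc 1 (s - 1) le_rfl]
        exact Finset.sum_Ioc_consecutive _ (by omega) (by omega)
      rw [← hsplit2, hpre]
      ring
    · have hsplit3 : ∑ j ∈ Finset.Icc ℓ (s - 1), x (πn j) + ∑ j ∈ Finset.Icc s u, x (πn j)
          = ∑ j ∈ Finset.Icc ℓ u, x (πn j) := by
        rw [hIcc ℓ (s - 1) hl, hIcc s u hs1', hIcc ℓ u hl]
        exact Finset.sum_Ioc_consecutive _ (by omega) (by omega)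
      have : v ≤ ∑ j ∈ Finset.Icc ℓ u, x (πn j) := by rw [hblk]; exact hvle
      linarith
end

section
/- Counterexample family for subtractive-threshold marking: for any 0 < θ < 1, 0 < ν < 1, and C ∈ ℕ, define δ := ⌈(1 − ν(⌈1/ν⌉−1))^{-1}⌉^{-1}, R := ⌈(2−θ)/θ⌉/δ + 1, N := (C+1)R, ε := (CR)^{-1}·min{1, (1−θ)(1+⌈(2−θ)/θ⌉)/θ}, and x = (1, ε,…,ε (CR times), δ,…,δ (R−1 times)). Then the set M' := {1} ∪ {N−R+2,…,N} satisfies the Dörfler criterion θ·∑_j x_j ≤ ∑_{j∈M'} x_j, so N_min ≤ R. -/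
/-- Counterexample family for subtractive-threshold marking: with
δ := ⌈(1 − ν(⌈1/ν⌉−1))⁻¹⌉⁻¹, R := ⌈(2−θ)/θ⌉/δ + 1 (a natural number by construction),
N := (C+1)·R, ε := (CR)⁻¹·min{1, (1−θ)(1+⌈(2−θ)/θ⌉)/θ}, and
x = (1, ε,…,ε (CR times), δ,…,δ (R−1 times)), the set M' := {1} ∪ {N−R+2,…,N}
satisfies the Dörfler criterion, so N_min ≤ R. -/
theorem stmt_18 (θ ν : ℝ) (hθ0 : 0 < θ) (hθ1 : θ < 1) (hν0 : 0 < ν) (hν1 : ν < 1)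
    (C R N : ℕ) (hC : 1 ≤ C) (δ ε : ℝ)
    (hδ : δ = ((⌈(1 - ν * ((⌈(1 : ℝ) / ν⌉ : ℝ) - 1))⁻¹⌉ : ℝ))⁻¹)
    (hR : (R : ℝ) = ((⌈(2 - θ) / θ⌉ : ℝ)) / δ + 1)
    (hN : N = (C + 1) * R)
    (hε : ε = ((C * R : ℕ) : ℝ)⁻¹
      * min 1 ((1 - θ) * (1 + ((⌈(2 - θ) / θ⌉ : ℝ))) / θ))
    (x : ℕ → ℝ) (hx1 : x 1 = 1)
    (hxε : ∀ j, 2 ≤ j → j ≤ C * R + 1 → x j = ε)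
    (hxδ : ∀ j, C * R + 2 ≤ j → j ≤ N → x j = δ) :
    (θ * ∑ j ∈ Finset.Icc 1 N, x j
      ≤ ∑ j ∈ insert 1 (Finset.Icc (N - R + 2) N), x j) ∧
    sInf {m : ℕ | ∃ M ⊆ Finset.Icc 1 N,
      (θ * ∑ j ∈ Finset.Icc 1 N, x j ≤ ∑ j ∈ M, x j) ∧ M.card = m} ≤ R := by
  set K : ℤ := ⌈(2 - θ) / θ⌉ with hKdef
  set m : ℤ := ⌈(1 - ν * ((⌈(1 : ℝ) / ν⌉ : ℝ) - 1))⁻¹⌉ with hmdef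
  -- positivity of t
  have ht : (0:ℝ) < 1 - ν * ((⌈(1 : ℝ) / ν⌉ : ℝ) - 1) := by
    have h1 : ((⌈(1 : ℝ) / ν⌉ : ℝ)) < 1 / ν + 1 := Int.ceil_lt_add_one _
    have h2 : ν * ((⌈(1 : ℝ) / ν⌉ : ℝ) - 1) < ν * (1/ν) := by
      apply mul_lt_mul_of_pos_left _ hν0
      linarith
    rw [mul_one_div_cancel (ne_of_gt hν0)] at h2
    linarith
  have hm1 : (1:ℤ) ≤ m := by
    rw [hmdef]
    have : (0:ℝ) < (1 - ν * ((⌈(1 : ℝ) / ν⌉ : ℝ) - 1))⁻¹ := by positivity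
    exact Int.ceil_pos.mpr this
  have hm1' : (1:ℝ) ≤ (m:ℝ) := by exact_mod_cast hm1
  have hδpos : 0 < δ := by rw [hδ]; positivity
  have hK1 : (1:ℤ) ≤ K := by
    rw [hKdef]
    exact Int.ceil_pos.mpr (div_pos (by linarith) hθ0)
  have hK1' : (1:ℝ) ≤ (K:ℝ) := by exact_mod_cast hK1
  have hRr : (R:ℝ) = (K:ℝ) * (m:ℝ) + 1 := by
    rw [hR, hδ, div_eq_mul_inv, inv_inv]
  have hR2 : 2 ≤ R := by
    have : (2:ℝ) ≤ (R:ℝ) := by nlinarith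
    exact_mod_cast this
  have hRδ : ((R:ℝ) - 1) * δ = (K:ℝ) := by
    have hδne : δ ≠ 0 := ne_of_gt hδpos
    rw [hR]
    field_simp
    ring
  have hN' : N = C * R + R := by rw [hN]; ring
  have hCR1 : (1:ℕ) ≤ C * R := Nat.one_le_iff_ne_zero.mpr (by positivity)
  have hCRpos : (0:ℝ) < ((C*R : ℕ):ℝ) := by exact_mod_cast hCR1
  -- sums
  have hIcc : Finset.Icc 1 N = Finset.Ioc 0 N := rfl
  have hs1 : ∑ j ∈ Finset.Ioc 0 1, x j = 1 := by
    have : Finset.Ioc (0:ℕ) 1 = {1} := rfl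
    rw [this, Finset.sum_singleton, hx1]
  have hs2 : ∑ j ∈ Finset.Ioc 1 (C*R+1), x j = ((C*R:ℕ):ℝ) * ε := by
    rw [Finset.sum_congr rfl (fun j hj => hxε j (by
        simp only [Finset.mem_Ioc] at hj; omega) (by
        simp only [Finset.mem_Ioc] at hj; omega)),
      Finset.sum_const, Nat.card_Ioc, nsmul_eq_mul]
    norm_num
  have hs3 : ∑ j ∈ Finset.Ioc (C*R+1) N, x j = ((R:ℝ) - 1) * δ := by
    rw [Finset.sum_congr rfl (fun j hj => hxδ j (by
        simp only [Finset.mem_Ioc] at hj; omega) (by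
        simp only [Finset.mem_Ioc] at hj; omega)),
      Finset.sum_const, Nat.card_Ioc, nsmul_eq_mul]
    have : N - (C*R+1) = R - 1 := by omega
    rw [this, Nat.cast_sub (by omega)]
    norm_num
  have hsplit : ∑ j ∈ Finset.Icc 1 N, x j = 1 + ((C*R:ℕ):ℝ) * ε + (K:ℝ) := by
    rw [hIcc, ← Finset.sum_Ioc_consecutive x (by omega : (0:ℕ) ≤ C*R+1) (by omega : C*R+1 ≤ N),
      ← Finset.sum_Ioc_consecutive x (by omega : (0:ℕ) ≤ 1) (by omega : 1 ≤ C*R+1),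
      hs1, hs2, hs3, hRδ]
  have hNR : N - R + 2 = C * R + 2 := by omega
  have h1not : (1:ℕ) ∉ Finset.Icc (N - R + 2) N := by
    simp only [Finset.mem_Icc]; omega
  have hIccIoc : Finset.Icc (N - R + 2) N = Finset.Ioc (C*R+1) N := by
    rw [hNR, show C*R+2 = (C*R+1)+1 from rfl, Finset.Icc_add_one_left_eq_Ioc]
  have hMsum : ∑ j ∈ insert 1 (Finset.Icc (N - R + 2) N), x j = 1 + (K:ℝ) := by
    rw [Finset.sum_insert h1not, hx1, hIccIoc, hs3, hRδ]
  have hεbound : ((C*R:ℕ):ℝ) * ε ≤ (1 - θ) * (1 + (K:ℝ)) / θ := by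
    rw [hε, ← mul_assoc, mul_inv_cancel₀ (ne_of_gt hCRpos), one_mul]
    exact min_le_right _ _
  have hmain : θ * ∑ j ∈ Finset.Icc 1 N, x j
      ≤ ∑ j ∈ insert 1 (Finset.Icc (N - R + 2) N), x j := by
    rw [hsplit, hMsum]
    have h3 : θ * (((C*R:ℕ):ℝ) * ε) ≤ (1 - θ) * (1 + (K:ℝ)) := by
      calc θ * (((C*R:ℕ):ℝ) * ε) ≤ θ * ((1 - θ) * (1 + (K:ℝ)) / θ) :=
            mul_le_mul_of_nonneg_left hεbound (le_of_lt hθ0)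
        _ = (1 - θ) * (1 + (K:ℝ)) := by field_simp
    nlinarith
  refine ⟨hmain, ?_⟩
  apply Nat.sInf_le
  refine ⟨insert 1 (Finset.Icc (N - R + 2) N), ?_, hmain, ?_⟩
  · apply Finset.insert_subset
    · simp only [Finset.mem_Icc]; omega
    · apply Finset.Icc_subset_Icc <;> omega
  · rw [Finset.card_insert_of_notMem h1not, Nat.card_Icc]
    omega
end

section
/- In the same counterexample family, it holds that θ·∑_{j=1}^N x_j > ∑_{j=1}^{CR+1} x_j = 1 + CR·ε; consequently the set {1,…,CR+1} does not satisfy the Dörfler criterion and any marking strategy that takes indices in the order 1, 2, 3,… must select more than CR + 1 > C·N_min indices. -/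
set_option maxHeartbeats 1000000 in
/-- In the same counterexample family, θ·∑ x_j > ∑_{j=1}^{CR+1} x_j = 1 + CR·ε;
consequently the set {1,…,CR+1} does not satisfy the Dörfler criterion, and any
strategy selecting indices in the order 1, 2, 3,… must take more than
CR + 1 > C·N_min indices. -/
theorem stmt_19 (θ ν : ℝ) (hθ0 : 0 < θ) (hθ1 : θ < 1) (hν0 : 0 < ν) (hν1 : ν < 1)
    (C R N : ℕ) (hC : 1 ≤ C) (δ ε : ℝ)
    (hδ : δ = ((⌈(1 - ν * ((⌈(1 : ℝ) / ν⌉ : ℝ) - 1))⁻¹⌉ : ℝ))⁻¹)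
    (hR : (R : ℝ) = ((⌈(2 - θ) / θ⌉ : ℝ)) / δ + 1)
    (hN : N = (C + 1) * R)
    (hε : ε = ((C * R : ℕ) : ℝ)⁻¹
      * min 1 ((1 - θ) * (1 + ((⌈(2 - θ) / θ⌉ : ℝ))) / θ))
    (x : ℕ → ℝ) (hx1 : x 1 = 1)
    (hxε : ∀ j, 2 ≤ j → j ≤ C * R + 1 → x j = ε)
    (hxδ : ∀ j, C * R + 2 ≤ j → j ≤ N → x j = δ) :
    (∑ j ∈ Finset.Icc 1 (C * R + 1), x j < θ * ∑ j ∈ Finset.Icc 1 N, x j) ∧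
    (∑ j ∈ Finset.Icc 1 (C * R + 1), x j = 1 + (C * R : ℕ) * ε) ∧
    (C * sInf {m : ℕ | ∃ M ⊆ Finset.Icc 1 N,
      (θ * ∑ j ∈ Finset.Icc 1 N, x j ≤ ∑ j ∈ M, x j) ∧ M.card = m}
      < C * R + 1) := by
  set K : ℝ := (⌈(2 - θ) / θ⌉ : ℝ) with hKdef
  have hθK : (2 - θ) / θ ≤ K := Int.le_ceil _
  have hK1 : 1 < (2 - θ) / θ := by rw [lt_div_iff₀ hθ0]; linarith
  have hKpos : 1 < K := lt_of_lt_of_le hK1 hθK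
  -- δ facts
  have hceil_lt : ((⌈(1 : ℝ) / ν⌉ : ℝ)) < 1 / ν + 1 := Int.ceil_lt_add_one _
  have hνinv : ν * (1 / ν) = 1 := by field_simp
  have htpos : 0 < 1 - ν * ((⌈(1 : ℝ) / ν⌉ : ℝ) - 1) := by nlinarith
  have hceil1 : (1 : ℝ) ≤ ((⌈(1 - ν * ((⌈(1 : ℝ) / ν⌉ : ℝ) - 1))⁻¹⌉ : ℝ)) := by
    have h := Int.ceil_pos.mpr (inv_pos.mpr htpos)
    exact_mod_cast h
  have hδpos : 0 < δ := by rw [hδ]; exact inv_pos.mpr (by linarith)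
  have hδ1 : δ ≤ 1 := by
    rw [hδ]
    exact inv_le_one_of_one_le₀ hceil1
  -- R facts
  have hKδ : 1 ≤ K / δ := by
    rw [le_div_iff₀ hδpos]; nlinarith
  have hR2 : (2 : ℝ) ≤ (R : ℝ) := by rw [hR]; linarith
  have hRnat : 2 ≤ R := by exact_mod_cast hR2
  have hCRpos : 0 < C * R := Nat.mul_pos hC (by omega)
  have hCRcast : (0 : ℝ) < ((C * R : ℕ) : ℝ) := by exact_mod_cast hCRpos
  set m : ℝ := min 1 ((1 - θ) * (1 + K) / θ) with hmdef
  have hCRε : ((C * R : ℕ) : ℝ) * ε = m := by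
    rw [hε]; field_simp
  have hm0 : 0 < m := lt_min one_pos (div_pos (mul_pos (by linarith) (by linarith)) hθ0)
  have hm1 : m ≤ 1 := min_le_left _ _
  have hm2 : m ≤ (1 - θ) * (1 + K) / θ := min_le_right _ _
  have hθK2 : 2 ≤ θ * (1 + K) := by
    have h := (div_le_iff₀ hθ0).mp hθK
    nlinarith
  have hθm : θ * m ≤ (1 - θ) * (1 + K) := by
    have h := (le_div_iff₀ hθ0).mp hm2
    nlinarith
  have hNval : N = C * R + R := by rw [hN]; ring
  -- first sum
  have hIcc1 : Finset.Icc 1 (C * R + 1) = insert 1 (Finset.Icc 2 (C * R + 1)) := by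
    ext j; simp only [Finset.mem_Icc, Finset.mem_insert]; omega
  have hsum2 : ∑ j ∈ Finset.Icc 2 (C * R + 1), x j = ((C * R : ℕ) : ℝ) * ε := by
    rw [Finset.sum_congr rfl (fun j hj => hxε j (Finset.mem_Icc.mp hj).1 (Finset.mem_Icc.mp hj).2)]
    rw [Finset.sum_const, Nat.card_Icc, nsmul_eq_mul]
    have h : C * R + 1 + 1 - 2 = C * R := by omega
    rw [h]
  have hS1 : ∑ j ∈ Finset.Icc 1 (C * R + 1), x j = 1 + ((C * R : ℕ) : ℝ) * ε := by
    rw [hIcc1, Finset.sum_insert (by simp), hx1, hsum2]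
  -- tail sum
  have hsumδ : ∑ j ∈ Finset.Icc (C * R + 2) N, x j = K := by
    rw [Finset.sum_congr rfl (fun j hj => hxδ j (Finset.mem_Icc.mp hj).1 (Finset.mem_Icc.mp hj).2)]
    rw [Finset.sum_const, Nat.card_Icc, nsmul_eq_mul]
    have hcard : N + 1 - (C * R + 2) = R - 1 := by omega
    rw [hcard]
    have hcast : ((R - 1 : ℕ) : ℝ) = (R : ℝ) - 1 := by
      have : 1 ≤ R := by omega
      push_cast [this]; ring
    rw [hcast, hR]
    field_simp; ring
  have hsplit : Finset.Icc 1 N = Finset.Icc 1 (C * R + 1) ∪ Finset.Icc (C * R + 2) N := by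
    ext j; simp only [Finset.mem_Icc, Finset.mem_union]; omega
  have hdisj : Disjoint (Finset.Icc 1 (C * R + 1)) (Finset.Icc (C * R + 2) N) := by
    rw [Finset.disjoint_left]
    intro a ha hb
    simp only [Finset.mem_Icc] at ha hb
    omega
  have hStot : ∑ j ∈ Finset.Icc 1 N, x j = 1 + m + K := by
    rw [hsplit, Finset.sum_union hdisj, hS1, hsumδ, hCRε]
  refine ⟨?_, ?_, ?_⟩
  · rw [hS1, hStot, hCRε]
    nlinarith [mul_pos hθ0 hm0]
  · exact hS1
  · have hmem : R ∈ {n : ℕ | ∃ M ⊆ Finset.Icc 1 N,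
        (θ * ∑ j ∈ Finset.Icc 1 N, x j ≤ ∑ j ∈ M, x j) ∧ M.card = n} := by
      refine ⟨insert 1 (Finset.Icc (C * R + 2) N), ?_, ?_, ?_⟩
      · apply Finset.insert_subset
        · simp only [Finset.mem_Icc]; omega
        · apply Finset.Icc_subset_Icc_left; omega
      · rw [Finset.sum_insert (by simp only [Finset.mem_Icc]; omega), hx1, hsumδ, hStot]
        nlinarith
      · rw [Finset.card_insert_of_notMem (by simp only [Finset.mem_Icc]; omega),
          Nat.card_Icc]
        omega
    have hInf : sInf {n : ℕ | ∃ M ⊆ Finset.Icc 1 N,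
        (θ * ∑ j ∈ Finset.Icc 1 N, x j ≤ ∑ j ∈ M, x j) ∧ M.card = n} ≤ R :=
      Nat.sInf_le hmem
    calc C * sInf {n : ℕ | ∃ M ⊆ Finset.Icc 1 N,
        (θ * ∑ j ∈ Finset.Icc 1 N, x j ≤ ∑ j ∈ M, x j) ∧ M.card = n}
        ≤ C * R := Nat.mul_le_mul_left C hInf
      _ < C * R + 1 := by omega
end
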